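/- arXiv:2305.14027 — 8 statements merged into one kernel-verified Lean document; each statement's English description precedes it below -/
import Mathlib

section
/- A 1-dimensional realization of a cycle C on vertices x_1,...,x_k (with edges x_1x_2, ..., x_{k-1}x_k, x_kx_1) satisfying p(x_1) < p(x_2) < ... < p(x_k) is universally rigid; that is, any realization q of C in any Euclidean space R^d with the same edge lengths is congruent to p. -/
/-- Two frameworks (one on the line, one in `ℝ^d`) are equivalent if corresponding
edge lengths agree. -/
def FrameworkEquiv {V : Type*} (G : SimpleGraph V) {d : ℕ}
    (p : V → ℝ) (q : V → EuclideanSpace ℝ (Fin d)) : Prop :=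
  ∀ ⦃u v : V⦄, G.Adj u v → dist (q u) (q v) = dist (p u) (p v)

/-- Two frameworks are congruent if all pairwise distances agree. -/
def FrameworkCongr {V : Type*} {d : ℕ}
    (p : V → ℝ) (q : V → EuclideanSpace ℝ (Fin d)) : Prop :=
  ∀ u v : V, dist (q u) (q v) = dist (p u) (p v)

/-- A 1-dimensional framework `(G,p)` is universally rigid if every equivalent
realization of `G` in any dimension is congruent to it. -/
def UniversallyRigid {V : Type*} (G : SimpleGraph V) (p : V → ℝ) : Prop :=
  ∀ (d : ℕ) (q : V → EuclideanSpace ℝ (Fin d)), FrameworkEquiv G p q → FrameworkCongr p q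

/-- A 1-dimensional configuration is generic if its coordinates are algebraically
independent over `ℚ`. -/
def GenericConfig {V : Type*} (p : V → ℝ) : Prop :=
  AlgebraicIndependent ℚ p

/-- A graph is generically universally rigid in `ℝ¹` if every generic 1-dimensional
realization is universally rigid. -/
def GenUnivRigid {V : Type*} (G : SimpleGraph V) : Prop :=
  ∀ p : V → ℝ, GenericConfig p → UniversallyRigid G p

/-- The cycle graph on `Fin k`: `i` adjacent to `i ± 1` (mod `k`). -/
def cycG (k : ℕ) : SimpleGraph (Fin k) :=
  SimpleGraph.fromRel (fun i j => (j : ℕ) = ((i : ℕ) + 1) % k)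

/-- A stretched cycle is universally rigid in `ℝ¹`. -/
theorem stretched_cycle_universally_rigid (k : ℕ) (hk : 3 ≤ k)
    (p : Fin k → ℝ) (hp : StrictMono p) :
    UniversallyRigid (cycG k) p := by
  intro d q hq
  -- edge lengths along the path
  have hedge : ∀ j : ℕ, (hj : j + 1 < k) →
      dist (q ⟨j, by omega⟩) (q ⟨j + 1, hj⟩) = p ⟨j + 1, hj⟩ - p ⟨j, by omega⟩ := by
    intro j hj
    have hadj : (cycG k).Adj ⟨j, by omega⟩ ⟨j + 1, hj⟩ := by
      refine ⟨?_, Or.inl ?_⟩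
      · exact Fin.ne_of_val_ne (by simp)
      · simp [Nat.mod_eq_of_lt hj]
    have hlt : p ⟨j, by omega⟩ < p ⟨j + 1, hj⟩ := hp (by simp)
    rw [hq hadj, Real.dist_eq, abs_sub_comm, abs_of_nonneg (by linarith)]
  -- chain bound
  have hchain : ∀ j (hj : j < k) (i : ℕ) (hij : i ≤ j),
      dist (q ⟨i, by omega⟩) (q ⟨j, hj⟩) ≤ p ⟨j, hj⟩ - p ⟨i, by omega⟩ := by
    intro j
    induction j with
    | zero =>
      intro hj i hij
      have : i = 0 := Nat.le_zero.mp hij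
      subst this; simp
    | succ n ih =>
      intro hj i hij
      rcases Nat.lt_succ_iff_lt_or_eq.mp (Nat.lt_succ_of_le hij) with h | h
      · have h1 := ih (by omega) i (by omega)
        have h2 := hedge n hj
        calc dist (q ⟨i, by omega⟩) (q ⟨n + 1, hj⟩)
            ≤ dist (q ⟨i, by omega⟩) (q ⟨n, by omega⟩) + dist (q ⟨n, by omega⟩) (q ⟨n + 1, hj⟩) :=
              dist_triangle _ _ _
          _ ≤ p ⟨n + 1, hj⟩ - p ⟨i, by omega⟩ := by linarith
      · subst h; simp
  -- closing edge
  have hclose : dist (q ⟨0, by omega⟩) (q ⟨k - 1, by omega⟩) = p ⟨k - 1, by omega⟩ - p ⟨0, by omega⟩ := by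
    have hadj : (cycG k).Adj ⟨k - 1, by omega⟩ ⟨0, by omega⟩ := by
      refine ⟨?_, Or.inl ?_⟩
      · intro h
        have := congrArg Fin.val h
        simp at this; omega
      · show (0 : ℕ) = (k - 1 + 1) % k
        have : k - 1 + 1 = k := by omega
        simp [this]
    have hlt : p ⟨0, by omega⟩ < p ⟨k - 1, by omega⟩ := hp (by simp; omega)
    rw [dist_comm, hq hadj, Real.dist_eq, abs_of_nonneg (by linarith)]
  -- key equality for i ≤ j
  have key : ∀ (i j : ℕ) (hij : i ≤ j) (hj : j < k),
      dist (q ⟨i, by omega⟩) (q ⟨j, hj⟩) = p ⟨j, hj⟩ - p ⟨i, by omega⟩ := by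
    intro i j hij hj
    have upper := hchain j hj i hij
    have t1 := hchain i (by omega) 0 (Nat.zero_le i)
    have t2 := hchain (k - 1) (by omega) j (by omega)
    have tri : dist (q ⟨0, by omega⟩) (q ⟨k - 1, by omega⟩) ≤
        dist (q ⟨0, by omega⟩) (q ⟨i, by omega⟩) + dist (q ⟨i, by omega⟩) (q ⟨j, hj⟩)
          + dist (q ⟨j, hj⟩) (q ⟨k - 1, by omega⟩) := dist_triangle4 _ _ _ _
    rw [hclose] at tri
    linarith
  intro u v
  rcases le_total u.1 v.1 with h | h
  · have := key u.1 v.1 h v.2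
    rw [Fin.eta, Fin.eta] at this
    rw [this, Real.dist_eq, abs_sub_comm, abs_of_nonneg]
    have : p u ≤ p v := hp.monotone (by exact h)
    linarith
  · have := key v.1 u.1 h u.2
    rw [Fin.eta, Fin.eta] at this
    rw [dist_comm, this, Real.dist_eq, abs_of_nonneg]
    have : p v ≤ p u := hp.monotone (by exact h)
    linarith
end

section
/- Let (G,p) be a universally rigid realization of a graph G in R^1, and let (G',p') be obtained from (G,p) by adding a new vertex w with p'(w) arbitrary and two new edges wx, wy to distinct vertices x,y of G. If p(x) ≠ p(y), then (G',p') is universally rigid. -/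
/-- The degree-2 extension of `H`: a new vertex (`none`) joined to `a` and `b`. -/
def ext2 {V : Type*} (H : SimpleGraph V) (a b : V) : SimpleGraph (Option V) where
  Adj x y := match x, y with
    | some u, some w => H.Adj u w
    | none, some u => u = a ∨ u = b
    | some u, none => u = a ∨ u = b
    | none, none => False
  symm := ⟨by rintro (_|x) (_|y) h <;> first | exact h.elim | exact h | exact H.adj_symm h⟩
  loopless := ⟨by rintro (_|x) h <;> first | exact h | exact H.irrefl h⟩

open scoped RealInnerProductSpace in
lemma collinear_point_aux {E : Type*} [NormedAddCommGroup E] [InnerProductSpace ℝ E]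
    (A B C : E) (a b c : ℝ) (hab : b ≠ a)
    (hAB : ‖B - A‖ = |b - a|) (hCA : ‖C - A‖ = |c - a|) (hCB : ‖C - B‖ = |c - b|) :
    C = A + ((c - a) / (b - a)) • (B - A) := by
  have hinner : (inner ℝ (C - A) (B - A) : ℝ) = (c - a) * (b - a) := by
    have h2 : ‖C - B‖ ^ 2 = ‖C - A‖ ^ 2 - 2 * (inner ℝ (C - A) (B - A) : ℝ) + ‖B - A‖ ^ 2 := by
      have hE : C - B = (C - A) - (B - A) := by abel
      rw [hE, norm_sub_sq_real]
    rw [hCA, hCB, hAB, sq_abs, sq_abs, sq_abs] at h2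
    linear_combination (1/2 : ℝ) * h2
  have hba : b - a ≠ 0 := sub_ne_zero.mpr hab
  have key : ‖C - (A + ((c - a) / (b - a)) • (B - A))‖ ^ 2 = 0 := by
    have hD : C - (A + ((c - a) / (b - a)) • (B - A))
        = (C - A) - ((c - a) / (b - a)) • (B - A) := by abel
    rw [hD, norm_sub_sq_real, inner_smul_right, hinner, norm_smul, hCA,
      Real.norm_eq_abs, hAB, sq_abs, mul_pow, sq_abs, sq_abs]
    field_simp
    ring
  have : C - (A + ((c - a) / (b - a)) • (B - A)) = 0 := by
    have := pow_eq_zero_iff (n := 2) (by norm_num) |>.mp key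
    exact norm_eq_zero.mp this
  exact sub_eq_zero.mp this

/-- Degree-2 extension preserves universal rigidity on the line provided the two
attachment points have distinct positions. -/
theorem deg2_extension_universally_rigid {V : Type*} (G : SimpleGraph V)
    (p : V → ℝ) (x y : V) (hxy : x ≠ y) (hp : p x ≠ p y)
    (hur : UniversallyRigid G p)
    (p' : Option V → ℝ) (hp' : ∀ v : V, p' (some v) = p v) :
    UniversallyRigid (ext2 G x y) p' := by
  intro d q hq
  -- the restricted framework is congruent to p
  have hequiv : FrameworkEquiv G p (fun v => q (some v)) := by
    intro u v huv
    have hadj : (ext2 G x y).Adj (some u) (some v) := huv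
    have := hq hadj
    rwa [hp', hp'] at this
  have hcong : FrameworkCongr p (fun v => q (some v)) := hur d _ hequiv
  set A := q (some x) with hA
  set B := q (some y) with hB
  set Q := q (none) with hQdef
  set a := p x with ha
  set b := p y with hb
  set w := p' none with hw
  have hba : b ≠ a := fun h => hp h.symm
  have hBA : ‖B - A‖ = |b - a| := by
    have := hcong y x
    simpa [dist_eq_norm, Real.dist_eq] using this
  have hQA : ‖Q - A‖ = |w - a| := by
    have hadj : (ext2 G x y).Adj none (some x) := Or.inl rfl
    have := hq hadj
    rw [hp'] at this
    simpa [dist_eq_norm, Real.dist_eq] using this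
  have hQB : ‖Q - B‖ = |w - b| := by
    have hadj : (ext2 G x y).Adj none (some y) := Or.inr rfl
    have := hq hadj
    rw [hp'] at this
    simpa [dist_eq_norm, Real.dist_eq] using this
  have hQeq : Q = A + ((w - a) / (b - a)) • (B - A) :=
    collinear_point_aux A B Q a b w hba hBA hQA hQB
  have hveq : ∀ v : V, q (some v) = A + ((p v - a) / (b - a)) • (B - A) := by
    intro v
    refine collinear_point_aux A B (q (some v)) a b (p v) hba hBA ?_ ?_
    · have := hcong v x
      simpa [dist_eq_norm, Real.dist_eq] using this
    · have := hcong v y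
      simpa [dist_eq_norm, Real.dist_eq] using this
  have hmain : ∀ v : V, dist Q (q (some v)) = |w - p v| := by
    intro v
    have hdiff : Q - q (some v) = ((w - p v) / (b - a)) • (B - A) := by
      have hs : (w - a) / (b - a) - (p v - a) / (b - a) = (w - p v) / (b - a) := by
        ring
      rw [hQeq, hveq v, ← hs, sub_smul]
      abel
    rw [dist_eq_norm, hdiff, norm_smul, Real.norm_eq_abs, hBA, abs_div,
      div_mul_cancel₀]
    exact fun h => sub_ne_zero.mpr hba (abs_eq_zero.mp h)
  rintro (_|u) (_|v)
  · simp
  · rw [Real.dist_eq]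
    rw [hp']
    exact hmain v
  · rw [dist_comm, Real.dist_eq, hp', abs_sub_comm]
    exact hmain u
  · simpa [hp'] using hcong u v
end

section
/- If G is a connected graph obtainable from a set of triangles by edge reduced attachments and edge additions, then G has no independent edge cut. -/
/-- `H` is a triangle: three distinct vertices, all pairs adjacent. -/
def IsTriangleGraph {α : Type*} (H : (⊤ : SimpleGraph α).Subgraph) : Prop :=
  ∃ a b c : α, a ≠ b ∧ a ≠ c ∧ b ≠ c ∧ H.verts = {a, b, c} ∧
    ∀ x y, H.Adj x y ↔ x ≠ y ∧ x ∈ H.verts ∧ y ∈ H.verts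

/-- `G` is the edge reduced attachment of `G₁` and `G₂` along `G₂`. -/
def IsERA {α : Type*} (G₁ G₂ G : (⊤ : SimpleGraph α).Subgraph) : Prop :=
  (G₁.verts ∩ G₂.verts).Nonempty ∧ (G₁.verts \ G₂.verts).Nonempty ∧
  (G₂.verts \ G₁.verts).Nonempty ∧
  G.verts = G₁.verts ∪ G₂.verts ∧
  ∀ x y, G.Adj x y ↔ G₁.Adj x y ∨
    (G₂.Adj x y ∧ ¬ (x ∈ G₁.verts ∩ G₂.verts ∧ y ∈ G₁.verts ∩ G₂.verts))

/-- `G'` is obtained from `G` by adding one edge between existing vertices. -/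
def IsEdgeAdd {α : Type*} (G G' : (⊤ : SimpleGraph α).Subgraph) : Prop :=
  G'.verts = G.verts ∧ ∃ a b, a ≠ b ∧ a ∈ G.verts ∧ b ∈ G.verts ∧
    ∀ x y, G'.Adj x y ↔ G.Adj x y ∨ (x = a ∧ y = b) ∨ (x = b ∧ y = a)

/-- Graphs obtainable from a set of triangles by edge reduced attachments and
edge additions. -/
inductive Buildable {α : Type*} : (⊤ : SimpleGraph α).Subgraph → Prop
  | triangle {H} : IsTriangleGraph H → Buildable H
  | attach {G₁ G₂ G} : Buildable G₁ → Buildable G₂ → IsERA G₁ G₂ G → Buildable G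
  | addEdge {G G'} : Buildable G → IsEdgeAdd G G' → Buildable G'

/-- `H` has an independent edge cut: a nonempty proper subset `X` of the vertex
set such that the edges between `X` and its complement are pairwise disjoint. -/
def HasIndepEdgeCut {α : Type*} (H : (⊤ : SimpleGraph α).Subgraph) : Prop :=
  ∃ X : Set α, X ⊆ H.verts ∧ X.Nonempty ∧ (H.verts \ X).Nonempty ∧
    ∀ u v u' v', u ∈ X → u' ∈ X → v ∈ H.verts \ X → v' ∈ H.verts \ X →
      H.Adj u v → H.Adj u' v' → (u = u' ↔ v = v')

/-- A connected buildable graph has no independent edge cut. -/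
theorem buildable_no_indep_edge_cut {α : Type*} (G : (⊤ : SimpleGraph α).Subgraph)
    (hc : G.Connected) (hb : Buildable G) :
    ¬ HasIndepEdgeCut G := by
  clear hc
  induction hb with
  | @triangle H ht =>
    rintro ⟨X, hXsub, ⟨x, hx⟩, ⟨w, hw, hwX⟩, hmatch⟩
    obtain ⟨a, b, c, hab, hac, hbc, hverts, hadj⟩ := ht
    have hxv : x ∈ H.verts := hXsub hx
    have hxw : x ≠ w := by rintro rfl; exact hwX hx
    have hx3 : x = a ∨ x = b ∨ x = c := by
      rwa [hverts, Set.mem_insert_iff, Set.mem_insert_iff, Set.mem_singleton_iff] at hxv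
    have hw3 : w = a ∨ w = b ∨ w = c := by
      rwa [hverts, Set.mem_insert_iff, Set.mem_insert_iff, Set.mem_singleton_iff] at hw
    obtain ⟨t, htv, htx, htw⟩ : ∃ t, t ∈ H.verts ∧ t ≠ x ∧ t ≠ w := by
      rcases hx3 with rfl | rfl | rfl <;> rcases hw3 with rfl | rfl | rfl
      · exact absurd rfl hxw
      · exact ⟨c, by rw [hverts]; simp, hac.symm, hbc.symm⟩
      · exact ⟨b, by rw [hverts]; simp, hab.symm, hbc⟩
      · exact ⟨c, by rw [hverts]; simp, hbc.symm, hac.symm⟩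
      · exact absurd rfl hxw
      · exact ⟨a, by rw [hverts]; simp, hab, hac⟩
      · exact ⟨b, by rw [hverts]; simp, hbc, hab.symm⟩
      · exact ⟨a, by rw [hverts]; simp, hac, hab⟩
      · exact absurd rfl hxw
    by_cases htX : t ∈ X
    · have h1 : H.Adj t w := (hadj t w).2 ⟨htw, htv, hw⟩
      have h2 : H.Adj x w := (hadj x w).2 ⟨hxw, hXsub hx, hw⟩
      have := hmatch t w x w htX hx ⟨hw, hwX⟩ ⟨hw, hwX⟩ h1 h2
      exact htx (this.2 rfl)
    · have h1 : H.Adj x t := (hadj x t).2 ⟨fun h => htx h.symm, hXsub hx, htv⟩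
      have h2 : H.Adj x w := (hadj x w).2 ⟨hxw, hXsub hx, hw⟩
      have := hmatch x t x w hx hx ⟨htv, htX⟩ ⟨hw, hwX⟩ h1 h2
      exact htw (this.1 rfl)
  | @attach G₁ G₂ G₃ hb1 hb2 hera ih1 ih2 =>
    rintro ⟨X, hXsub, hXne, hXc, hmatch⟩
    obtain ⟨hI, h12, h21, hV, hAdj⟩ := hera
    by_cases h1 : (X ∩ G₁.verts).Nonempty ∧ (G₁.verts \ X).Nonempty
    · apply ih1
      refine ⟨X ∩ G₁.verts, Set.inter_subset_right, h1.1, ?_, ?_⟩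
      · obtain ⟨v, hv⟩ := h1.2
        exact ⟨v, hv.1, fun h => hv.2 h.1⟩
      · intro u v u' v' hu hu' hv hv' ha ha'
        have hvX : v ∉ X := fun h => hv.2 ⟨h, hv.1⟩
        have hv'X : v' ∉ X := fun h => hv'.2 ⟨h, hv'.1⟩
        exact hmatch u v u' v' hu.1 hu'.1 ⟨hV ▸ Or.inl hv.1, hvX⟩
          ⟨hV ▸ Or.inl hv'.1, hv'X⟩ ((hAdj u v).2 (Or.inl ha))
          ((hAdj u' v').2 (Or.inl ha'))
    · rcases not_and_or.mp h1 with hA | hB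
      · -- X ∩ V₁ = ∅, so X ⊆ V₂; use V₂ \ X as a cut of G₂
        have hXV1 : ∀ z, z ∈ X → z ∉ G₁.verts := fun z hz hz1 => hA ⟨z, hz, hz1⟩
        have hXV2 : X ⊆ G₂.verts := by
          intro z hz
          rcases hV ▸ hXsub hz with h | h
          · exact absurd h (hXV1 z hz)
          · exact h
        apply ih2
        obtain ⟨p, hp⟩ := hI
        obtain ⟨x, hx⟩ := hXne
        have hpX : p ∉ X := fun h => hXV1 p h hp.1
        refine ⟨G₂.verts \ X, Set.diff_subset, ⟨p, hp.2, hpX⟩,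
          ⟨x, hXV2 hx, fun h => h.2 hx⟩, ?_⟩
        intro u v u' v' hu hu' hv hv' ha ha'
        have hvX : v ∈ X := by
          by_contra h
          exact hv.2 ⟨hv.1, h⟩
        have hv'X : v' ∈ X := by
          by_contra h
          exact hv'.2 ⟨hv'.1, h⟩
        have hga : G₃.Adj v u := ((hAdj v u).2 (Or.inr ⟨ha.symm,
          fun h => hXV1 v hvX h.1.1⟩))
        have hga' : G₃.Adj v' u' := ((hAdj v' u').2 (Or.inr ⟨ha'.symm,
          fun h => hXV1 v' hv'X h.1.1⟩))
        have := hmatch v u v' u' hvX hv'X ⟨hV ▸ Or.inr hu.1, hu.2⟩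
          ⟨hV ▸ Or.inr hu'.1, hu'.2⟩ hga hga'
        exact ⟨fun h => this.2 h, fun h => this.1 h⟩
      · -- V₁ ⊆ X; use X ∩ V₂ as a cut of G₂
        have hV1X : G₁.verts ⊆ X := by
          intro z hz
          by_contra h
          exact hB ⟨z, hz, h⟩
        apply ih2
        obtain ⟨p, hp⟩ := hI
        obtain ⟨w, hw⟩ := hXc
        have hwV2 : w ∈ G₂.verts := by
          rcases hV ▸ hw.1 with h | h
          · exact absurd (hV1X h) hw.2
          · exact h
        refine ⟨X ∩ G₂.verts, Set.inter_subset_right, ⟨p, hV1X hp.1, hp.2⟩,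
          ⟨w, hwV2, fun h => hw.2 h.1⟩, ?_⟩
        intro u v u' v' hu hu' hv hv' ha ha'
        have hvX : v ∉ X := fun h => hv.2 ⟨h, hv.1⟩
        have hv'X : v' ∉ X := fun h => hv'.2 ⟨h, hv'.1⟩
        have hvV1 : v ∉ G₁.verts := fun h => hvX (hV1X h)
        have hv'V1 : v' ∉ G₁.verts := fun h => hv'X (hV1X h)
        exact hmatch u v u' v' hu.1 hu'.1 ⟨hV ▸ Or.inr hv.1, hvX⟩
          ⟨hV ▸ Or.inr hv'.1, hv'X⟩
          ((hAdj u v).2 (Or.inr ⟨ha, fun h => hvV1 h.2.1⟩))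
          ((hAdj u' v').2 (Or.inr ⟨ha', fun h => hv'V1 h.2.1⟩))
  | @addEdge G₀ G' hb0 hadd ih =>
    rintro ⟨X, hs, hne, hc', hm⟩
    obtain ⟨hVeq, a, b, hab, ha, hb, hAdj⟩ := hadd
    apply ih
    refine ⟨X, hVeq ▸ hs, hne, hVeq ▸ hc', ?_⟩
    intro u v u' v' hu hu' hv hv' h h'
    exact hm u v u' v' hu hu' (hVeq ▸ hv) (hVeq ▸ hv')
      ((hAdj u v).2 (Or.inl h)) ((hAdj u' v').2 (Or.inl h'))
end

section
/- Let G and H be disjoint graphs each generically universally rigid in R^1, each on at least 4 vertices, and let B = G ⊔ H be obtained by adding k ≥ 4 disjoint edges v_1u_1, ..., v_ku_k between distinct vertices v_i of G and distinct vertices u_i of H. Then B is generically universally rigid in R^1. -/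
open scoped RealInnerProductSpace

lemma inner_from_norms {E : Type*} [NormedAddCommGroup E] [InnerProductSpace ℝ E]
    (x y : E) : ⟪x, y⟫ = (‖x‖^2 + ‖y‖^2 - ‖x - y‖^2)/2 := by
  have := norm_sub_sq_real x y; linarith

lemma line_rep {E : Type*} [NormedAddCommGroup E] [InnerProductSpace ℝ E]
    {V : Type*} (x : V → ℝ) (Q : V → E)
    (hcong : ∀ a b : V, ‖Q a - Q b‖ = |x a - x b|)
    {a0 a1 : V} (hne : x a1 ≠ x a0) :
    ∃ (A : E) (e : E), ‖e‖ = 1 ∧ ∀ a, Q a = A + x a • e := by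
  have hsub : x a1 - x a0 ≠ 0 := sub_ne_zero.mpr hne
  set e : E := (x a1 - x a0)⁻¹ • (Q a1 - Q a0) with he
  have hnorm : ‖e‖ = 1 := by
    rw [he, norm_smul, hcong a1 a0, norm_inv, Real.norm_eq_abs,
      inv_mul_cancel₀ (abs_ne_zero.mpr hsub)]
  refine ⟨Q a0 - x a0 • e, e, hnorm, fun a => ?_⟩
  have key : Q a - Q a0 = (x a - x a0) • e := by
    set w : E := Q a1 - Q a0 with hw
    set z : E := Q a - Q a0 with hz
    set t : ℝ := (x a - x a0) * (x a1 - x a0)⁻¹ with ht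
    have hzw : z - w = Q a - Q a1 := by rw [hz, hw]; abel
    have h1 : ‖z‖^2 = (x a - x a0)^2 := by rw [hz, hcong, sq_abs]
    have h2 : ‖w‖^2 = (x a1 - x a0)^2 := by rw [hw, hcong, sq_abs]
    have h3 : ‖z - w‖^2 = (x a - x a1)^2 := by rw [hzw, hcong, sq_abs]
    have hinner : ⟪z, w⟫ = (x a - x a0) * (x a1 - x a0) := by
      rw [inner_from_norms, h1, h2, h3]; ring
    have hexp : ‖z - t • w‖^2 = 0 := by
      rw [norm_sub_sq_real, real_inner_smul_right, norm_smul, mul_pow,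
        Real.norm_eq_abs, sq_abs, h1, h2, hinner, ht]
      field_simp
      ring
    have hz0 : z = t • w := by
      have h5 := hexp
      rwa [pow_eq_zero_iff (two_ne_zero), norm_eq_zero, sub_eq_zero] at h5
    rw [hz0, he, ht, smul_smul]
  have h4 : Q a = Q a0 + (x a - x a0) • e := by rw [← key]; abel
  rw [h4, sub_smul]
  abel

lemma solve_system {z : Fin 4 ⊕ Fin 4 → ℝ} (hz : AlgebraicIndependent ℚ z)
    {c α β γ : ℝ}
    (h : ∀ i : Fin 4, c + z (.inl i) * α + z (.inr i) * β
        + z (.inl i) * z (.inr i) * γ = 0) :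
    c = 0 ∧ α = 0 ∧ β = 0 ∧ γ = 0 := by
  classical
  set M : Matrix (Fin 4) (Fin 4) ℝ :=
    Matrix.of fun i => ![(1:ℝ), z (.inl i), z (.inr i), z (.inl i) * z (.inr i)] with hM
  have hMv : M.mulVec ![c, α, β, γ] = 0 := by
    funext i
    have hi := h i
    simp only [hM, Matrix.mulVec, dotProduct, Fin.sum_univ_four, Matrix.of_apply,
      Matrix.cons_val_zero, Matrix.cons_val_one, Matrix.head_cons, Matrix.cons_val_two,
      Matrix.tail_cons, Matrix.cons_val_three, Pi.zero_apply]
    linarith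
  have hdet : M.det ≠ 0 := by
    set N : Matrix (Fin 4) (Fin 4) (MvPolynomial (Fin 4 ⊕ Fin 4) ℚ) :=
      Matrix.of fun i => ![1, MvPolynomial.X (.inl i), MvPolynomial.X (.inr i),
        MvPolynomial.X (.inl i) * MvPolynomial.X (.inr i)] with hN
    have hmap : M = N.map (MvPolynomial.aeval z) := by
      ext i j
      fin_cases j <;> simp [hM, hN]
    have hNdet : N.det ≠ 0 := by
      intro h0
      have := congrArg (MvPolynomial.eval (Sum.elim ![(0:ℚ),0,1,1] ![0,1,0,1])) h0
      rw [RingHom.map_det, RingHom.mapMatrix_apply] at this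
      have hexpl : N.map (MvPolynomial.eval (Sum.elim ![(0:ℚ),0,1,1] ![0,1,0,1])) =
          Matrix.of ![![1,0,0,0],![1,0,1,0],![1,1,0,0],![1,1,1,1]] := by
        ext i j
        fin_cases i <;> fin_cases j <;> simp [hN, Matrix.vecHead, Matrix.vecTail]
      rw [hexpl] at this
      rw [Matrix.det_succ_row_zero] at this
      simp [Fin.sum_univ_succ, Matrix.det_fin_three, Fin.succAbove] at this
    have hMN : M.det = MvPolynomial.aeval z N.det := by
      rw [(MvPolynomial.aeval z).map_det, AlgHom.mapMatrix_apply, hmap]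
    rw [hMN]
    intro hc
    exact hNdet (hz (by simpa using hc))
  have hvz := Matrix.eq_zero_of_mulVec_eq_zero hdet hMv
  refine ⟨?_, ?_, ?_, ?_⟩
  · simpa using congrFun hvz 0
  · simpa using congrFun hvz 1
  · simpa using congrFun hvz 2
  · simpa using congrFun hvz 3


lemma expand_norm {E : Type*} [NormedAddCommGroup E] [InnerProductSpace ℝ E]
    (D e f : E) (he : ‖e‖ = 1) (hf : ‖f‖ = 1) (s t : ℝ) :
    ‖D + s • e - t • f‖^2
      = ‖D‖^2 + s^2 + t^2 + 2*s*⟪D,e⟫ - 2*t*⟪D,f⟫ - 2*s*t*⟪e,f⟫ := by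
  have hee : ⟪e,e⟫ = 1 := by rw [real_inner_self_eq_norm_sq, he]; norm_num
  have hff : ⟪f,f⟫ = 1 := by rw [real_inner_self_eq_norm_sq, hf]; norm_num
  have hDD : ⟪D,D⟫ = ‖D‖^2 := real_inner_self_eq_norm_sq D
  rw [← real_inner_self_eq_norm_sq, ← hDD]
  simp only [inner_add_left, inner_add_right, inner_sub_left, inner_sub_right,
    real_inner_smul_left, real_inner_smul_right]
  rw [hee, hff, real_inner_comm e D, real_inner_comm f D, real_inner_comm f e]
  ring



/-- The join of `G` and `H` along the `k` edges `v i — u i`. -/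
def joinGraph {V U : Type*} {k : ℕ} (G : SimpleGraph V) (H : SimpleGraph U)
    (v : Fin k → V) (u : Fin k → U) : SimpleGraph (V ⊕ U) where
  Adj x y := match x, y with
    | .inl a, .inl b => G.Adj a b
    | .inr a, .inr b => H.Adj a b
    | .inl a, .inr b => ∃ i, a = v i ∧ b = u i
    | .inr a, .inl b => ∃ i, b = v i ∧ a = u i
  symm := by
    constructor
    rintro (a|a) (b|b) h
    · exact G.adj_symm h
    · exact h
    · exact h
    · exact H.adj_symm h
  loopless := by
    constructor
    rintro (a|a) h
    · exact G.irrefl h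
    · exact H.irrefl h

/-- The join of two generically universally rigid graphs along `k ≥ 4` disjoint
edges is generically universally rigid in `ℝ¹`. -/
theorem join_genUnivRigid {V U : Type*} [Fintype V] [Fintype U] {k : ℕ}
    (G : SimpleGraph V) (H : SimpleGraph U) (v : Fin k → V) (u : Fin k → U)
    (hv : Function.Injective v) (hu : Function.Injective u)
    (hk : 4 ≤ k) (hV : 4 ≤ Fintype.card V) (hU : 4 ≤ Fintype.card U)
    (hG : GenUnivRigid G) (hH : GenUnivRigid H) :
    GenUnivRigid (joinGraph G H v u) := by
  classical
  intro p hp d q hq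
  have hpinj : Function.Injective p := hp.injective
  -- restrict to the two sides
  have hpV : AlgebraicIndependent ℚ (p ∘ Sum.inl) := hp.comp Sum.inl Sum.inl_injective
  have hpU : AlgebraicIndependent ℚ (p ∘ Sum.inr) := hp.comp Sum.inr Sum.inr_injective
  have hcongG : FrameworkCongr (p ∘ Sum.inl) (q ∘ Sum.inl) :=
    hG _ hpV d _ (fun a b hab =>
      hq (show (joinGraph G H v u).Adj (Sum.inl a) (Sum.inl b) from hab))
  have hcongH : FrameworkCongr (p ∘ Sum.inr) (q ∘ Sum.inr) :=
    hH _ hpU d _ (fun a b hab =>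
      hq (show (joinGraph G H v u).Adj (Sum.inr a) (Sum.inr b) from hab))
  have hnG : ∀ a b : V, ‖q (Sum.inl a) - q (Sum.inl b)‖ = |p (Sum.inl a) - p (Sum.inl b)| := by
    intro a b
    have := hcongG a b
    rwa [Function.comp_apply, Function.comp_apply, Function.comp_apply, Function.comp_apply,
      dist_eq_norm, Real.dist_eq] at this
  have hnH : ∀ a b : U, ‖q (Sum.inr a) - q (Sum.inr b)‖ = |p (Sum.inr a) - p (Sum.inr b)| := by
    intro a b
    have := hcongH a b
    rwa [Function.comp_apply, Function.comp_apply, Function.comp_apply, Function.comp_apply,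
      dist_eq_norm, Real.dist_eq] at this
  -- line representations for both sides
  obtain ⟨a0, a1, ha⟩ : ∃ a0 a1 : V, a0 ≠ a1 :=
    Fintype.exists_pair_of_one_lt_card (by omega)
  obtain ⟨b0, b1, hb⟩ : ∃ b0 b1 : U, b0 ≠ b1 :=
    Fintype.exists_pair_of_one_lt_card (by omega)
  have hxa : p (Sum.inl a1) ≠ p (Sum.inl a0) :=
    fun h => ha (Sum.inl_injective (hpinj h)).symm
  have hxb : p (Sum.inr b1) ≠ p (Sum.inr b0) :=
    fun h => hb (Sum.inr_injective (hpinj h)).symm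
  obtain ⟨A, e, he, hrepG⟩ :=
    line_rep (fun a : V => p (Sum.inl a)) (fun a : V => q (Sum.inl a)) hnG hxa
  obtain ⟨B, f, hf, hrepH⟩ :=
    line_rep (fun b : U => p (Sum.inr b)) (fun b : U => q (Sum.inr b)) hnH hxb
  -- the generic family indexed by the first four joining edges
  set emb : Fin 4 ⊕ Fin 4 → V ⊕ U :=
    Sum.elim (fun i => Sum.inl (v (Fin.castLE hk i))) (fun i => Sum.inr (u (Fin.castLE hk i)))
    with hemb
  have hembinj : Function.Injective emb := by
    rintro (i | i) (j | j) hij <;> simp only [hemb, Sum.elim_inl, Sum.elim_inr] at hij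
    · exact congrArg Sum.inl (Fin.castLE_injective hk (hv (Sum.inl_injective hij)))
    · exact absurd hij (by simp)
    · exact absurd hij (by simp)
    · exact congrArg Sum.inr (Fin.castLE_injective hk (hu (Sum.inr_injective hij)))
  have hz : AlgebraicIndependent ℚ (p ∘ emb) := hp.comp emb hembinj
  -- the system of equations coming from the joining edges
  have hsys : ∀ i : Fin 4,
      ‖A - B‖^2 + (p ∘ emb) (.inl i) * (2*⟪A - B, e⟫)
        + (p ∘ emb) (.inr i) * (-2*⟪A - B, f⟫)
        + (p ∘ emb) (.inl i) * (p ∘ emb) (.inr i) * (2 - 2*⟪e, f⟫) = 0 := by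
    intro i
    have hadj : (joinGraph G H v u).Adj (Sum.inl (v (Fin.castLE hk i)))
        (Sum.inr (u (Fin.castLE hk i))) := ⟨Fin.castLE hk i, rfl, rfl⟩
    have hdist := hq hadj
    rw [dist_eq_norm, Real.dist_eq] at hdist
    have hsq : ‖q (Sum.inl (v (Fin.castLE hk i))) - q (Sum.inr (u (Fin.castLE hk i)))‖^2
        = (p (Sum.inl (v (Fin.castLE hk i))) - p (Sum.inr (u (Fin.castLE hk i))))^2 := by
      rw [hdist, sq_abs]
    rw [hrepG (v (Fin.castLE hk i)), hrepH (u (Fin.castLE hk i))] at hsq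
    have harr : A + p (Sum.inl (v (Fin.castLE hk i))) • e
        - (B + p (Sum.inr (u (Fin.castLE hk i))) • f)
        = A - B + p (Sum.inl (v (Fin.castLE hk i))) • e
          - p (Sum.inr (u (Fin.castLE hk i))) • f := by abel
    rw [harr, expand_norm (A - B) e f he hf] at hsq
    simp only [hemb, Function.comp_apply, Sum.elim_inl, Sum.elim_inr]
    linear_combination hsq
  obtain ⟨hc, hα, hβ, hγ⟩ := solve_system hz hsys
  -- deduce A = B and e = f
  have hAB : A = B := by
    have : ‖A - B‖ = 0 := by
      have := hc
      rwa [pow_eq_zero_iff two_ne_zero] at this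
    rw [norm_eq_zero, sub_eq_zero] at this
    exact this
  have hef : e = f := by
    have hip : ⟪e, f⟫ = 1 := by linarith
    have : ‖e - f‖^2 = 0 := by
      rw [norm_sub_sq_real, hip, he, hf]; norm_num
    rw [pow_eq_zero_iff two_ne_zero, norm_eq_zero, sub_eq_zero] at this
    exact this
  -- cross distances
  have cross : ∀ (a : V) (b : U),
      dist (q (Sum.inl a)) (q (Sum.inr b)) = dist (p (Sum.inl a)) (p (Sum.inr b)) := by
    intro a b
    rw [dist_eq_norm, Real.dist_eq, hrepG a, hrepH b, hAB, hef]
    have : B + p (Sum.inl a) • f - (B + p (Sum.inr b) • f)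
        = (p (Sum.inl a) - p (Sum.inr b)) • f := by
      rw [sub_smul]; abel
    rw [this, norm_smul, Real.norm_eq_abs, hf, mul_one]
  -- conclude
  rintro (a | a) (b | b)
  · exact hcongG a b
  · exact cross a b
  · rw [dist_comm, dist_comm (p (Sum.inr a))]; exact cross b a
  · exact hcongH a b
end

section
/- The graph B_n, obtained from two disjoint copies of K_n joined by a perfect matching of n edges, is generically universally rigid in R^1 for all n ≥ 4. -/
/-- `B_n`: two disjoint copies of `K_n` joined by a perfect matching. -/
def matchingJoin (n : ℕ) : SimpleGraph (Fin n ⊕ Fin n) where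
  Adj x y := match x, y with
    | .inl a, .inl b => a ≠ b
    | .inr a, .inr b => a ≠ b
    | .inl a, .inr b => a = b
    | .inr a, .inl b => a = b
  symm := ⟨by rintro (a|a) (b|b) h <;> exact h.symm⟩
  loopless := ⟨by rintro (a|a) h <;> simp at h⟩

open RealInnerProductSpace

lemma norm_sq_expand {E : Type*} [NormedAddCommGroup E] [InnerProductSpace ℝ E]
    (D u v : E) (hu : ‖u‖ = 1) (hv : ‖v‖ = 1) (c e : ℝ) :
    ‖D + c • u - e • v‖ ^ 2 =
      ‖D‖ ^ 2 + c ^ 2 + e ^ 2 + 2 * c * ⟪D, u⟫ - 2 * e * ⟪D, v⟫ - 2 * c * e * ⟪u, v⟫ := by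
  have h1 : ⟪u, u⟫ = 1 := by rw [real_inner_self_eq_norm_sq, hu]; norm_num
  have h2 : ⟪v, v⟫ = 1 := by rw [real_inner_self_eq_norm_sq, hv]; norm_num
  rw [← real_inner_self_eq_norm_sq, ← real_inner_self_eq_norm_sq]
  simp only [inner_add_left, inner_add_right, inner_sub_left, inner_sub_right,
    real_inner_smul_left, real_inner_smul_right, h1, h2,
    real_inner_comm u D, real_inner_comm v D, real_inner_comm v u]
  ring

lemma line_rep_s8 {E : Type*} [NormedAddCommGroup E] [InnerProductSpace ℝ E]
    {ι : Type*} (x : ι → ℝ) (q : ι → E)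
    (h : ∀ i j, ‖q i - q j‖ = |x i - x j|) (i0 i1 : ι) (hx : x i1 ≠ x i0) :
    ∃ u : E, ‖u‖ = 1 ∧ ∀ i, q i = q i0 + (x i - x i0) • u := by
  have hsq : ∀ i j, ‖q i - q j‖ ^ 2 = (x i - x j) ^ 2 := by
    intro i j; rw [h i j, sq_abs]
  have key : ∀ i j, ⟪q i - q i0, q j - q i0⟫ = (x i - x i0) * (x j - x i0) := by
    intro i j
    have e3 : ‖(q i - q i0) - (q j - q i0)‖ ^ 2 = (x i - x j) ^ 2 := by
      rw [sub_sub_sub_cancel_right]; exact hsq i j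
    rw [norm_sub_sq_real] at e3
    have e1 := hsq i i0
    have e2 := hsq j i0
    nlinarith [e3, e1, e2]
  set s : ℝ := x i1 - x i0 with hs
  have hs0 : s ≠ 0 := sub_ne_zero.mpr hx
  refine ⟨s⁻¹ • (q i1 - q i0), ?_, ?_⟩
  · have : ‖q i1 - q i0‖ = |s| := h i1 i0
    rw [norm_smul, this, norm_inv, Real.norm_eq_abs]
    field_simp
  · intro i
    have hz : ‖(q i - q i0) - (x i - x i0) • (s⁻¹ • (q i1 - q i0))‖ ^ 2 = 0 := by
      rw [norm_sub_sq_real, smul_smul, real_inner_smul_right, norm_smul, mul_pow,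
        Real.norm_eq_abs, sq_abs]
      rw [key i i1]
      have h1 : ‖q i - q i0‖ ^ 2 = (x i - x i0) ^ 2 := hsq i i0
      have h2 : ‖q i1 - q i0‖ ^ 2 = s ^ 2 := hsq i1 i0
      rw [h1, h2]
      field_simp
      ring
    have : (q i - q i0) - (x i - x i0) • (s⁻¹ • (q i1 - q i0)) = 0 := by
      have := pow_eq_zero_iff (n := 2) (by norm_num) |>.mp hz
      exact norm_eq_zero.mp this
    have := sub_eq_zero.mp this
    rw [smul_smul] at this
    rw [smul_smul]
    rw [← this]
    abel

/-- `B_n` is generically universally rigid in `ℝ¹` for `n ≥ 4`. -/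
theorem Bn_genUnivRigid (n : ℕ) (hn : 4 ≤ n) :
    GenUnivRigid (matchingJoin n) := by
  intro p hp d q hq
  have hpinj : Function.Injective p := hp.injective
  -- the four index points
  have h0n : 0 < n := by omega
  have h1n : 1 < n := by omega
  have h2n : 2 < n := by omega
  have h3n : 3 < n := by omega
  set i0 : Fin n := ⟨0, h0n⟩
  set i1 : Fin n := ⟨1, h1n⟩
  set i2 : Fin n := ⟨2, h2n⟩
  set i3 : Fin n := ⟨3, h3n⟩
  set x : Fin n → ℝ := fun a => p (Sum.inl a) with hxdef
  set y : Fin n → ℝ := fun a => p (Sum.inr a) with hydef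
  have hx10 : x i1 ≠ x i0 := by
    intro h
    have := hpinj h
    simp [i0, i1, Fin.ext_iff] at this
  have hy10 : y i1 ≠ y i0 := by
    intro h
    have := hpinj h
    simp [i0, i1, Fin.ext_iff] at this
  -- distances inside each copy
  have h_inl : ∀ a b, ‖q (Sum.inl a) - q (Sum.inl b)‖ = |x a - x b| := by
    intro a b
    rcases eq_or_ne a b with rfl | hab
    · simp
    · have := hq (show (matchingJoin n).Adj (Sum.inl a) (Sum.inl b) from hab)
      rwa [dist_eq_norm, Real.dist_eq] at this
  have h_inr : ∀ a b, ‖q (Sum.inr a) - q (Sum.inr b)‖ = |y a - y b| := by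
    intro a b
    rcases eq_or_ne a b with rfl | hab
    · simp
    · have := hq (show (matchingJoin n).Adj (Sum.inr a) (Sum.inr b) from hab)
      rwa [dist_eq_norm, Real.dist_eq] at this
  have h_cross : ∀ a, ‖q (Sum.inl a) - q (Sum.inr a)‖ = |x a - y a| := by
    intro a
    have := hq (show (matchingJoin n).Adj (Sum.inl a) (Sum.inr a) from rfl)
    rwa [dist_eq_norm, Real.dist_eq] at this
  obtain ⟨u, hu, hrepu⟩ := line_rep_s8 x (fun a => q (Sum.inl a)) h_inl i0 i1 hx10
  obtain ⟨v, hv, hrepv⟩ := line_rep_s8 y (fun a => q (Sum.inr a)) h_inr i0 i1 hy10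
  set A : EuclideanSpace ℝ (Fin d) := q (Sum.inl i0) with hA
  set B : EuclideanSpace ℝ (Fin d) := q (Sum.inr i0) with hB
  set D : EuclideanSpace ℝ (Fin d) := A - B with hD
  set α : ℝ := ⟪D, u⟫ with hα
  set β : ℝ := ⟪D, v⟫ with hβ
  set t : ℝ := ⟪u, v⟫ with ht
  have Eq : ∀ a, ‖D‖ ^ 2 + (x a - x i0) ^ 2 + (y a - y i0) ^ 2
      + 2 * (x a - x i0) * α - 2 * (y a - y i0) * β
      - 2 * (x a - x i0) * (y a - y i0) * t = (x a - y a) ^ 2 := by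
    intro a
    have hqa : q (Sum.inl a) - q (Sum.inr a)
        = D + (x a - x i0) • u - (y a - y i0) • v := by
      have h1 := hrepu a
      have h2 := hrepv a
      rw [h1, h2, hD, hA, hB]
      module
    have := h_cross a
    rw [hqa] at this
    have hsq : ‖D + (x a - x i0) • u - (y a - y i0) • v‖ ^ 2 = (x a - y a) ^ 2 := by
      rw [this, sq_abs]
    rw [norm_sq_expand D u v hu hv] at hsq
    exact hsq
  set k : ℝ := x i0 - y i0 with hk
  have homog : ∀ a, (x a - x i0) * (α - k) - (y a - y i0) * (β - k)
      - (x a - x i0) * (y a - y i0) * (t - 1) = 0 := by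
    intro a
    linear_combination (Eq a) / 2 - (Eq i0) / 2
  set c1 : ℝ := x i1 - x i0
  set c2 : ℝ := x i2 - x i0
  set c3 : ℝ := x i3 - x i0
  set e1 : ℝ := y i1 - y i0
  set e2 : ℝ := y i2 - y i0
  set e3 : ℝ := y i3 - y i0
  set detv : ℝ := c1 * e2 * e3 * (c3 - c2) + c2 * c3 * e1 * (e2 - e3)
    - c1 * e1 * (c3 * e2 - c2 * e3) with hdetv
  have hdt : detv * (t - 1) = 0 := by
    linear_combination (c3 * e2 - c2 * e3) * homog i1 + (c1 * e3 - c3 * e1) * homog i2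
      + (c2 * e1 - c1 * e2) * homog i3
  have hda : detv * (α - k) = 0 := by
    linear_combination (e2 * e3 * (c3 - c2)) * homog i1 + (- e3 * (e1 * c3 - c1 * e1)) * homog i2
      + (e2 * (e1 * c2 - c1 * e1)) * homog i3
  have hdb : detv * (β - k) = 0 := by
    linear_combination (c2 * c3 * (e3 - e2)) * homog i1 + (c1 * c3 * (e1 - e3)) * homog i2
      + (c1 * c2 * (e2 - e1)) * homog i3
  -- the determinant is nonzero by genericity
  have hdet_ne : detv ≠ 0 := by
    intro hdz
    set X := fun i => (MvPolynomial.X i : MvPolynomial (Fin n ⊕ Fin n) ℚ) with hX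
    set Pc1 := X (Sum.inl i1) - X (Sum.inl i0) with hPc1
    set Pc2 := X (Sum.inl i2) - X (Sum.inl i0) with hPc2
    set Pc3 := X (Sum.inl i3) - X (Sum.inl i0) with hPc3
    set Pe1 := X (Sum.inr i1) - X (Sum.inr i0) with hPe1
    set Pe2 := X (Sum.inr i2) - X (Sum.inr i0) with hPe2
    set Pe3 := X (Sum.inr i3) - X (Sum.inr i0) with hPe3
    set P : MvPolynomial (Fin n ⊕ Fin n) ℚ :=
      Pc1 * Pe2 * Pe3 * (Pc3 - Pc2) + Pc2 * Pc3 * Pe1 * (Pe2 - Pe3)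
        - Pc1 * Pe1 * (Pc3 * Pe2 - Pc2 * Pe3) with hP
    have haev : (MvPolynomial.aeval p) P = detv := by
      simp only [hP, hPc1, hPc2, hPc3, hPe1, hPe2, hPe3, hX, map_add, map_sub, map_mul,
        MvPolynomial.aeval_X]
      rfl
    have hPzero : P = 0 := by
      apply hp
      rw [haev, hdz, map_zero]
    -- evaluate at a rational point where P is nonzero
    have : MvPolynomial.eval
        (Sum.elim (fun a : Fin n => if a.val = 1 ∨ a.val = 3 then (1 : ℚ) else 0)
          (fun a : Fin n => if a.val = 2 ∨ a.val = 3 then (1 : ℚ) else 0)) P = 0 := by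
      rw [hPzero, map_zero]
    rw [hP, hPc1, hPc2, hPc3, hPe1, hPe2, hPe3, hX] at this
    simp only [map_add, map_sub, map_mul, MvPolynomial.eval_X, Sum.elim_inl, Sum.elim_inr] at this
    norm_num at this
  have ht1 : t = 1 := by
    have := mul_eq_zero.mp hdt
    rcases this with h | h
    · exact absurd h hdet_ne
    · linarith [sub_eq_zero.mp h]
  have hαk : α = k := by
    have := mul_eq_zero.mp hda
    rcases this with h | h
    · exact absurd h hdet_ne
    · linarith [sub_eq_zero.mp h]
  -- v = u
  have hvu : v = u := by
    have hz : ‖u - v‖ ^ 2 = 0 := by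
      rw [norm_sub_sq_real]
      rw [hu, hv, ← ht, ht1]
      norm_num
    have := norm_eq_zero.mp (pow_eq_zero_iff (n := 2) (by norm_num) |>.mp hz)
    exact (sub_eq_zero.mp this).symm
  -- D = k • u
  have hC : ‖D‖ ^ 2 = k ^ 2 := by
    rw [hk]
    linear_combination Eq i0
  have hDku : D = k • u := by
    have hz : ‖D - k • u‖ ^ 2 = 0 := by
      rw [norm_sub_sq_real, real_inner_smul_right, norm_smul, mul_pow, Real.norm_eq_abs,
        sq_abs, hu, hC, ← hα, hαk]
      ring
    have := norm_eq_zero.mp (pow_eq_zero_iff (n := 2) (by norm_num) |>.mp hz)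
    exact sub_eq_zero.mp this
  -- uniform representation
  have hrep : ∀ w, q w = B + (p w - y i0) • u := by
    rintro (a | b)
    · have h1 := hrepu a
      have hAB : A = B + k • u := by
        rw [← hDku, hD]; abel
      rw [h1, hAB, hk]
      have hx' : p (Sum.inl a) = x a := rfl
      rw [hx']
      module
    · have h2 := hrepv b
      rw [h2, hvu]
  intro w1 w2
  rw [dist_eq_norm, hrep w1, hrep w2, Real.dist_eq]
  have : (B + (p w1 - y i0) • u) - (B + (p w2 - y i0) • u) = (p w1 - p w2) • u := by
    module
  rw [this, norm_smul, Real.norm_eq_abs, hu, mul_one]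
end

section
/- The graph K_n − e obtained from the complete graph on n vertices by deleting one edge is generically universally rigid in R^1 for all n ≥ 4. -/
/-- Equality case of Cauchy–Schwarz, in the concrete form we need. -/
lemma aux_parallel {E : Type*} [NormedAddCommGroup E] [InnerProductSpace ℝ E]
    (x z : E) (s t : ℝ) (ht : t ≠ 0) (hx : ‖x‖ = |s|) (hz : ‖z‖ = |t|)
    (hxz : (inner ℝ x z : ℝ) = s * t) : x = (s / t) • z := by
  have h : ‖x - (s / t) • z‖ ^ 2 = 0 := by
    rw [norm_sub_sq_real, real_inner_smul_right, norm_smul, hx, hz, hxz,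
      Real.norm_eq_abs, mul_pow, sq_abs, sq_abs, sq_abs]
    field_simp
    ring
  have h0 : x - (s / t) • z = 0 :=
    norm_eq_zero.mp (pow_eq_zero_iff (n := 2) (by norm_num) |>.mp h)
  exact sub_eq_zero.mp h0

lemma aux_inner {E : Type*} [NormedAddCommGroup E] [InnerProductSpace ℝ E]
    (x y : E) (s t : ℝ) (hx : ‖x‖ = |s|) (hy : ‖y‖ = |t|) (hxy : ‖x - y‖ = |s - t|) :
    (inner ℝ x y : ℝ) = s * t := by
  have h := norm_sub_sq_real x y
  rw [hx, hy, hxy] at h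
  have h1 : (s : ℝ) ^ 2 = |s| ^ 2 := (sq_abs s).symm
  have h2 : (t : ℝ) ^ 2 = |t| ^ 2 := (sq_abs t).symm
  have h3 : (s - t) ^ 2 = |s - t| ^ 2 := (sq_abs (s - t)).symm
  nlinarith [h]

/-- `Kₙ − e` is generically universally rigid in `ℝ¹` for `n ≥ 4`. -/
theorem Kn_minus_e_genUnivRigid (n : ℕ) (hn : 4 ≤ n) (a b : Fin n) (hab : a ≠ b) :
    GenUnivRigid ((⊤ : SimpleGraph (Fin n)) \ SimpleGraph.fromEdgeSet {s(a, b)}) := by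
  intro p hp d q hq
  have hpinj : Function.Injective p := hp.injective
  -- find two auxiliary vertices distinct from a and b
  obtain ⟨c, e, hca, hcb, hea, heb, hce⟩ :
      ∃ c e : Fin n, c ≠ a ∧ c ≠ b ∧ e ≠ a ∧ e ≠ b ∧ c ≠ e := by
    have h1 : ({a, b} : Finset (Fin n)).card ≤ 2 :=
      (Finset.card_insert_le _ _).trans (by simp)
    have h2 := Finset.card_compl ({a, b} : Finset (Fin n))
    rw [Fintype.card_fin] at h2
    have hcard : 1 < (({a, b} : Finset (Fin n))ᶜ).card := by omega
    obtain ⟨c, hc, e, he, hce⟩ := Finset.one_lt_card.mp hcard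
    simp only [Finset.mem_compl, Finset.mem_insert, Finset.mem_singleton, not_or] at hc he
    exact ⟨c, e, hc.1, hc.2, he.1, he.2, hce⟩
  -- distances agree for every pair other than {a,b}
  have hdist : ∀ u v : Fin n, u ≠ v → ¬(u = a ∧ v = b) → ¬(u = b ∧ v = a) →
      dist (q u) (q v) = dist (p u) (p v) := by
    intro u v huv h1 h2
    apply hq
    simp only [SimpleGraph.sdiff_adj, SimpleGraph.top_adj, SimpleGraph.fromEdgeSet_adj,
      Set.mem_singleton_iff, Sym2.eq, Sym2.rel_iff', Prod.mk.injEq, Prod.swap_prod_mk]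
    refine ⟨huv, ?_⟩
    tauto
  have hnorm : ∀ u v : Fin n, ¬(u = a ∧ v = b) → ¬(u = b ∧ v = a) →
      ‖q u - q v‖ = |p u - p v| := by
    intro u v h1 h2
    rcases eq_or_ne u v with rfl | huv
    · simp
    · have := hdist u v huv h1 h2
      rwa [dist_eq_norm, Real.dist_eq] at this
  have hτ : p e - p c ≠ 0 := sub_ne_zero.mpr fun h => hce (hpinj h.symm)
  have hze : ‖q e - q c‖ = |p e - p c| := hnorm e c (by tauto) (by tauto)
  have hfact : ∀ u : Fin n, ¬(u = a ∧ e = b) → ¬(u = b ∧ e = a) →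
      q u - q c = ((p u - p c) / (p e - p c)) • (q e - q c) := by
    intro u h1 h2
    apply aux_parallel _ _ (p u - p c) (p e - p c) hτ
    · exact hnorm u c (by tauto) (by tauto)
    · exact hze
    · apply aux_inner _ _ (p u - p c) (p e - p c)
      · exact hnorm u c (by tauto) (by tauto)
      · exact hze
      · have hq1 : q u - q c - (q e - q c) = q u - q e := by abel
        have hp1 : p u - p c - (p e - p c) = p u - p e := by ring
        rw [hq1, hp1]
        exact hnorm u e h1 h2
  have hqa : q a - q c = ((p a - p c) / (p e - p c)) • (q e - q c) :=
    hfact a (by tauto) (by tauto)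
  have hqb : q b - q c = ((p b - p c) / (p e - p c)) • (q e - q c) :=
    hfact b (by tauto) (by tauto)
  -- the missing distance
  have hkey : dist (q a) (q b) = dist (p a) (p b) := by
    rw [dist_eq_norm, Real.dist_eq]
    have hsub : q a - q b = (q a - q c) - (q b - q c) := by abel
    rw [hsub, hqa, hqb, ← sub_smul, norm_smul, hze, Real.norm_eq_abs,
      div_sub_div_same, abs_div]
    have habs : |p e - p c| ≠ 0 := abs_ne_zero.mpr hτ
    have : (p a - p c - (p b - p c)) = p a - p b := by ring
    rw [this, div_mul_cancel₀ _ habs]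
  -- conclude congruence
  intro u v
  rcases eq_or_ne u v with rfl | huv
  · simp
  by_cases h1 : u = a ∧ v = b
  · rw [h1.1, h1.2]; exact hkey
  by_cases h2 : u = b ∧ v = a
  · rw [h2.1, h2.2, dist_comm, dist_comm (p b)]; exact hkey
  · exact hdist u v huv h1 h2
end

section
/- If G=(V,E) is a graph with |V| ≥ 6 and |E| < (3/2)|V|, then G is not generically universally rigid in R^1. -/
noncomputable def emb {V : Type*} {d : ℕ} (A : V → EuclideanSpace ℝ (Fin d)) (b c : V → ℝ)
    (u : V) : EuclideanSpace ℝ (Fin (d+2)) :=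
  WithLp.toLp 2 (fun i => if h : (i : ℕ) < d then A u ⟨i, h⟩ else if (i : ℕ) = d then b u else c u)

lemma emb_dist {V : Type*} {d : ℕ} (A : V → EuclideanSpace ℝ (Fin d)) (b c : V → ℝ)
    (u w : V) : dist (emb A b c u) (emb A b c w)
      = Real.sqrt ((dist (A u) (A w))^2 + (b u - b w)^2 + (c u - c w)^2) := by
  rw [EuclideanSpace.dist_eq, Fin.sum_univ_castSucc, Fin.sum_univ_castSucc]
  have h1 : ∀ x (i : Fin d), emb A b c x i.castSucc.castSucc = A x i := by
    intro x i; simp [emb, i.isLt]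
  have h2 : ∀ x, emb A b c x (Fin.last d).castSucc = b x := by
    intro x; simp [emb]
  have h3 : ∀ x, emb A b c x (Fin.last (d+1)) = c x := by
    intro x; simp [emb]
  rw [h2, h2, h3, h3]
  congr 1
  have : ∑ i : Fin d, dist (emb A b c u i.castSucc.castSucc) (emb A b c w i.castSucc.castSucc) ^ 2
      = ∑ i : Fin d, dist (A u i) (A w i) ^ 2 := by
    refine Finset.sum_congr rfl fun i _ => ?_
    rw [h1 u, h1 w]
  rw [this]
  have hd : dist (A u) (A w) = Real.sqrt (∑ i : Fin d, dist (A u i) (A w i) ^ 2) :=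
    EuclideanSpace.dist_eq _ _
  rw [hd, Real.sq_sqrt (by positivity), Real.dist_eq, Real.dist_eq, sq_abs, sq_abs]
open Cardinal in
lemma Ioo_not_countable (l u : ℝ) (h : l < u) : ¬ (Set.Ioo l u).Countable := by
  intro hc
  have h1 : #(Set.Ioo l u) ≤ ℵ₀ := hc.le_aleph0
  rw [Cardinal.mk_Ioo_real h] at h1
  exact absurd h1 (not_le.2 Cardinal.aleph0_lt_continuum)

lemma adjoin_countable {ι : Type*} [Countable ι] (p : ι → ℝ) :
    Countable (Algebra.adjoin ℚ (Set.range p)) := by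
  haveI : Countable ↥(Set.range p) := (Set.countable_range p).to_subtype
  haveI : Countable (MvPolynomial ↥(Set.range p) ℚ) :=
    AddMonoidAlgebra.coeffEquiv.symm.surjective.countable
  rw [Algebra.adjoin_eq_range ℚ (Set.range p)]
  have hs : Function.Surjective
      (fun q : MvPolynomial ↥(Set.range p) ℚ =>
        (⟨MvPolynomial.aeval (Subtype.val) q, ⟨q, rfl⟩⟩ :
          (MvPolynomial.aeval (Subtype.val : Set.range p → ℝ)).range)) := by
    rintro ⟨x, q, rfl⟩; exact ⟨q, rfl⟩
  exact hs.countable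

lemma exists_transcendental_extension {ι : Type*} [Countable ι] (p : ι → ℝ)
    (hp : AlgebraicIndependent ℚ p) (l u : ℝ) (hlu : l < u) :
    ∃ x ∈ Set.Ioo l u, AlgebraicIndependent ℚ (fun o : Option ι => o.elim x p) := by
  haveI := adjoin_countable p
  haveI : Module.IsTorsionFree (Algebra.adjoin ℚ (Set.range p)) ℝ :=
    Module.isTorsionFree_iff_algebraMap_injective.2 (by
      exact Subtype.val_injective)
  have hbad : Set.Countable {x : ℝ | IsAlgebraic (Algebra.adjoin ℚ (Set.range p)) x} :=
    Algebraic.countable _ _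
  have : ¬ (Set.Ioo l u ⊆ {x : ℝ | IsAlgebraic (Algebra.adjoin ℚ (Set.range p)) x}) := by
    intro hsub
    exact Ioo_not_countable l u hlu (hbad.mono hsub)
  obtain ⟨x, hx, hxa⟩ := Set.not_subset.1 this
  exact ⟨x, hx, (hp.option_iff_transcendental x).2 hxa⟩

lemma extend_family {ι : Type*} [DecidableEq ι] (v : ι) (p' : {u : ι // u ≠ v} → ℝ) (x : ℝ)
    (h : AlgebraicIndependent ℚ (fun o : Option {u : ι // u ≠ v} => o.elim x p')) :
    AlgebraicIndependent ℚ (fun u : ι => if hu : u = v then x else p' ⟨u, hu⟩) := by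
  have hinj : Function.Injective
      (fun u : ι => if hu : u = v then none else some ⟨u, hu⟩ :
        ι → Option {u : ι // u ≠ v}) := by
    intro a b hab
    by_cases ha : a = v <;> by_cases hb : b = v
    · rw [ha, hb]
    · simp [ha, hb] at hab
    · simp [ha, hb] at hab
    · simpa [ha, hb] using hab
  have := h.comp _ hinj
  convert this using 1
  ext u
  by_cases hu : u = v <;> simp [hu]

lemma exists_generic_aux : ∀ (n : ℕ) (ι : Type u) [Fintype ι], Fintype.card ι = n →
    ∃ p : ι → ℝ, AlgebraicIndependent ℚ p := by
  intro n
  induction n with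
  | zero =>
    intro ι _ hcard
    haveI := Fintype.card_eq_zero_iff.1 hcard
    exact ⟨fun u => (0:ℝ), algebraicIndependent_empty_type_iff.2 (by
      exact fun a b hab => by exact_mod_cast hab)⟩
  | succ n ih =>
    intro ι _ hcard
    classical
    have : 0 < Fintype.card ι := by omega
    obtain ⟨v⟩ := Fintype.card_pos_iff.1 this
    have hcard' : Fintype.card {u : ι // u ≠ v} = n := by
      have h1 := Fintype.card_subtype_compl (fun u : ι => u = v)
      have h2 : Fintype.card {x : ι // x = v} = 1 := Fintype.card_subtype_eq v
      simp only [ne_eq]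
      rw [h1, h2, hcard]
      omega
    obtain ⟨p', hp'⟩ := ih {u : ι // u ≠ v} hcard'
    obtain ⟨x, _, hx⟩ := exists_transcendental_extension p' hp' 0 1 one_pos
    exact ⟨_, extend_family v p' x hx⟩
universe u

noncomputable def emb1 {V : Type u} (f : V → ℝ) : V → EuclideanSpace ℝ (Fin 2) :=
  emb (fun _ => (0 : EuclideanSpace ℝ (Fin 0))) f (fun _ => 0)

lemma emb1_dist {V : Type u} (f : V → ℝ) (a b : V) :
    dist (emb1 f a) (emb1 f b) = |f a - f b| := by
  rw [emb1, emb_dist]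
  simp [Real.sqrt_sq_eq_abs]

lemma exists_generic (ι : Type u) [Fintype ι] : ∃ p : ι → ℝ, AlgebraicIndependent ℚ p :=
  exists_generic_aux (Fintype.card ι) ι rfl

lemma not_GUR_of_low_degree {V : Type u} [Fintype V] (G : SimpleGraph V)
    (h3 : 3 ≤ Fintype.card V) (v u : V) (huv : u ≠ v)
    (hnb : ∀ w, G.Adj v w → w = u) : ¬ GenUnivRigid G := by
  classical
  obtain ⟨p, hp⟩ := exists_generic V
  intro hGUR
  set f : V → ℝ := fun w => if w = v then 2 * p u - p v else p w with hf
  have hfv : f v = 2 * p u - p v := by simp [hf]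
  have hfne : ∀ w, w ≠ v → f w = p w := fun w hw => by simp [hf, hw]
  have hequiv : FrameworkEquiv G p (emb1 f) := by
    intro a b hab
    rw [emb1_dist, Real.dist_eq]
    rcases eq_or_ne a v with ha | ha
    · have hb : b = u := hnb b (by rwa [ha] at hab)
      rw [ha, hb, hfv, hfne u huv]
      rw [show 2 * p u - p v - p u = -(p v - p u) by ring, abs_neg]
    · rcases eq_or_ne b v with hb | hb
      · have ha' : a = u := hnb a (by rw [hb] at hab; exact hab.symm)
        rw [ha', hb, hfne u huv, hfv]
        rw [show p u - (2 * p u - p v) = -(p u - p v) by ring, abs_neg]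
      · rw [hfne a ha, hfne b hb]
  have hcong := hGUR p hp 2 (emb1 f) hequiv
  -- find w distinct from u, v
  have hw : ∃ w : V, w ≠ u ∧ w ≠ v := by
    by_contra hcon
    push_neg at hcon
    have hsub : (Finset.univ : Finset V) ⊆ {u, v} := by
      intro w _
      rcases eq_or_ne w u with rfl | hwu
      · simp
      · simp [hcon w hwu]
    have := Finset.card_le_card hsub
    have h2 : ({u, v} : Finset V).card ≤ 2 := Finset.card_insert_le _ _ |>.trans (by simp)
    rw [Finset.card_univ] at this
    omega
  obtain ⟨w, hwu, hwv⟩ := hw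
  have := hcong v w
  rw [emb1_dist, Real.dist_eq, hfv, hfne w hwv] at this
  -- |2 p u - p v - p w| = |p v - p w| forces p u = p v or p u = p w
  have hsq : (2 * p u - p v - p w)^2 = (p v - p w)^2 := by
    have := congrArg (·^2) this
    simpa [sq_abs] using this
  have hfac : (p u - p v) * (p u - p w) = 0 := by nlinarith [hsq]
  rcases mul_eq_zero.1 hfac with h | h
  · exact huv (hp.injective (by linarith))
  · exact hwu (hp.injective (by linarith)).symm
lemma sqrt_sq_eq_of_sq_eq {x y : ℝ} (hx : 0 ≤ x) (hy : 0 ≤ y) (h : x^2 = y^2) : x = y := by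
  rw [← Real.sqrt_sq hx, h, Real.sqrt_sq hy]

lemma abs_abs_sub_abs_le_abs_add (p q : ℝ) : abs (|p| - |q|) ≤ |p + q| := by
  have h1 := abs_sub_abs_le_abs_sub p (-q)
  have h2 := abs_sub_abs_le_abs_sub q (-p)
  rw [abs_neg, sub_neg_eq_add] at h1 h2
  rw [abs_le]
  constructor
  · have : |q + p| = |p + q| := by rw [add_comm]
    linarith [this ▸ h2]
  · exact h1

lemma deletion_lemma {V : Type u} [Fintype V] [DecidableEq V] (G : SimpleGraph V) (v a b : V)
    (hab : a ≠ b) (hav : a ≠ v) (hbv : b ≠ v)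
    (hnb : ∀ w, G.Adj v w → w = a ∨ w = b)
    (hG : GenUnivRigid G) :
    GenUnivRigid (SimpleGraph.comap (Subtype.val : {w : V // w ≠ v} → V) G) := by
  intro p' hp'0 d q' hequiv'
  have hp' : AlgebraicIndependent ℚ p' := hp'0
  set A := p' ⟨a, hav⟩ with hA
  set B := p' ⟨b, hbv⟩ with hB
  have hABne : A ≠ B := by
    intro h
    exact hab (congrArg Subtype.val (hp'.injective h))
  set r3 := |A - B| with hr3
  have hr3pos : 0 < r3 := abs_pos.2 (sub_ne_zero.2 hABne)
  set s := dist (q' ⟨a, hav⟩) (q' ⟨b, hbv⟩) with hs_def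
  have hs : 0 ≤ s := dist_nonneg
  set σ := Real.sqrt ((s^2 + r3^2)/2) with hσ_def
  have hσsq : σ^2 = (s^2 + r3^2)/2 := Real.sq_sqrt (by positivity)
  have hσpos : 0 < σ := Real.sqrt_pos.2 (by positivity)
  -- choose the interval for the new coordinate
  have hchoice : ∃ l u : ℝ, l < u ∧ ∀ x ∈ Set.Ioo l u,
      |(|x - A|) - (|x - B|)| ≤ σ ∧ σ ≤ |x - A| + |x - B| := by
    rcases le_or_gt σ r3 with hc | hc
    · refine ⟨(A+B)/2 - σ/2, (A+B)/2 + σ/2, by linarith, fun x hx => ?_⟩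
      obtain ⟨hx1, hx2⟩ := hx
      constructor
      · have h1 := abs_abs_sub_abs_le_abs_add (x - A) (x - B)
        have h2 : |(x - A) + (x - B)| ≤ σ := by
          rw [abs_le]; constructor <;> nlinarith
        linarith
      · have h3 : r3 ≤ |x - A| + |x - B| := by
          have : A - B = (x - B) - (x - A) := by ring
          rw [hr3, this]
          have := abs_sub (x - B) (x - A)
          linarith [this]
        linarith
    · refine ⟨max A B + σ, max A B + σ + 1, by linarith, fun x hx => ?_⟩
      obtain ⟨hx1, hx2⟩ := hx
      have hxA : σ < x - A := by
        have : A ≤ max A B := le_max_left A B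
        linarith
      have hxB : σ < x - B := by
        have : B ≤ max A B := le_max_right A B
        linarith
      rw [abs_of_pos (by linarith : (0:ℝ) < x - A), abs_of_pos (by linarith : (0:ℝ) < x - B)]
      constructor
      · have : (x - A) - (x - B) = -(A - B) := by ring
        rw [this, abs_neg, ← hr3]
        exact hc.le
      · linarith
  obtain ⟨l, u, hlu, hcond⟩ := hchoice
  obtain ⟨x, hxI, hxgen⟩ := exists_transcendental_extension p' hp' l u hlu
  set p : V → ℝ := fun w => if h : w = v then x else p' ⟨w, h⟩ with hpdef
  have hpgen : AlgebraicIndependent ℚ p := extend_family v p' x hxgen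
  have hpv : p v = x := by simp [hpdef]
  have hpne : ∀ (w : V) (h : w ≠ v), p w = p' ⟨w, h⟩ := fun w h => by simp [hpdef, h]
  set r1 := |x - A| with hr1
  set r2 := |x - B| with hr2
  have hr1n : 0 ≤ r1 := abs_nonneg _
  have hr2n : 0 ≤ r2 := abs_nonneg _
  obtain ⟨h1, h2⟩ := hcond x hxI
  set α := (σ^2 + r1^2 - r2^2)/(2*σ) with hα
  have hβsq : 0 ≤ r1^2 - α^2 := by
    have key : 0 ≤ (r2 - σ + r1)*((r2 + σ - r1)*((σ + r1 - r2)*(σ + r1 + r2))) := by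
      have e1 : r1 - r2 ≤ σ := (abs_le.1 h1).2
      have e2 : r2 - r1 ≤ σ := by
        have := (abs_le.1 h1).1; linarith
      refine mul_nonneg (by linarith) (mul_nonneg (by linarith)
        (mul_nonneg (by linarith) (by linarith)))
    have heq : r1^2 - α^2 =
        ((r2 - σ + r1)*((r2 + σ - r1)*((σ + r1 - r2)*(σ + r1 + r2))))/(4*σ^2) := by
      rw [hα]
      field_simp
      ring
    rw [heq]
    exact div_nonneg key (by positivity)
  set β := Real.sqrt (r1^2 - α^2) with hβ_def
  have hβsq' : β^2 = r1^2 - α^2 := Real.sq_sqrt hβsq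
  have hβn : 0 ≤ β := Real.sqrt_nonneg _
  set κ := Real.sqrt (1/2) with hκ_def
  have hκsq : κ^2 = 1/2 := Real.sq_sqrt (by norm_num)
  have hκn : 0 ≤ κ := Real.sqrt_nonneg _
  set t := α / σ with ht
  -- the configuration in dimension d+2
  set Qc : V → EuclideanSpace ℝ (Fin d) := fun w =>
    if h : w = v then κ • (q' ⟨a, hav⟩ + t • (q' ⟨b, hbv⟩ - q' ⟨a, hav⟩)) else κ • q' ⟨w, h⟩ with hQc
  set Pc : V → ℝ := fun w =>
    if h : w = v then κ * (A + t * (B - A)) else κ * p' ⟨w, h⟩ with hPc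
  set Ec : V → ℝ := fun w => if w = v then β else 0 with hEc
  set q : V → EuclideanSpace ℝ (Fin (d+2)) := emb Qc Pc Ec with hq
  -- squared distance formula
  have hdist_sq : ∀ w z : V, (dist (q w) (q z))^2 =
      (dist (Qc w) (Qc z))^2 + (Pc w - Pc z)^2 + (Ec w - Ec z)^2 := by
    intro w z
    rw [hq, emb_dist, Real.sq_sqrt (by positivity)]
  have hQne : ∀ (w : V) (h : w ≠ v), Qc w = κ • q' ⟨w, h⟩ := fun w h => by simp [hQc, h]
  have hPne : ∀ (w : V) (h : w ≠ v), Pc w = κ * p' ⟨w, h⟩ := fun w h => by simp [hPc, h]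
  have hEne : ∀ (w : V) (h : w ≠ v), Ec w = 0 := fun w h => by simp [hEc, h]
  have hQv : Qc v = κ • (q' ⟨a, hav⟩ + t • (q' ⟨b, hbv⟩ - q' ⟨a, hav⟩)) := by simp [hQc]
  have hPv : Pc v = κ * (A + t * (B - A)) := by simp [hPc]
  have hEv : Ec v = β := by simp [hEc]
  -- distances between old vertices
  have hold : ∀ (w z : V) (hw : w ≠ v) (hz : z ≠ v), (dist (q w) (q z))^2 =
      (1/2) * (dist (q' ⟨w, hw⟩) (q' ⟨z, hz⟩))^2 + (1/2) * (dist (p' ⟨w, hw⟩) (p' ⟨z, hz⟩))^2 := by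
    intro w z hw hz
    rw [hdist_sq, hQne w hw, hQne z hz, hPne w hw, hPne z hz, hEne w hw, hEne z hz]
    rw [dist_smul₀]
    have : κ * p' ⟨w, hw⟩ - κ * p' ⟨z, hz⟩ = κ * (p' ⟨w, hw⟩ - p' ⟨z, hz⟩) := by ring
    rw [this]
    rw [Real.norm_eq_abs, abs_of_nonneg hκn]
    rw [Real.dist_eq]
    have hP : |p' ⟨w, hw⟩ - p' ⟨z, hz⟩|^2 = (p' ⟨w, hw⟩ - p' ⟨z, hz⟩)^2 := sq_abs _
    linear_combination ((dist (q' ⟨w, hw⟩) (q' ⟨z, hz⟩))^2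
      + (p' ⟨w, hw⟩ - p' ⟨z, hz⟩)^2) * hκsq - (1/2) * hP
  -- distance from v to a
  have hQa : (dist (Qc v) (Qc a))^2 = κ^2 * (t^2 * s^2) := by
    rw [hQv, hQne a hav, dist_eq_norm]
    have e : κ • ((q' ⟨a, hav⟩) + t • (q' ⟨b, hbv⟩ - q' ⟨a, hav⟩)) - κ • q' ⟨a, hav⟩
        = κ • (t • (q' ⟨b, hbv⟩ - q' ⟨a, hav⟩)) := by
      rw [← smul_sub, add_sub_cancel_left]
    rw [e, norm_smul, norm_smul, Real.norm_eq_abs, Real.norm_eq_abs, ← dist_eq_norm,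
      dist_comm (q' ⟨b, hbv⟩) (q' ⟨a, hav⟩), ← hs_def, mul_pow, mul_pow, sq_abs, sq_abs]
  have hPa : (Pc v - Pc a)^2 = κ^2 * (t^2 * r3^2) := by
    rw [hPv, hPne a hav]
    have hsq' : r3^2 = (A - B)^2 := by rw [hr3, sq_abs]
    linear_combination (-(κ^2*t^2)) * hsq'
  have hEa : (Ec v - Ec a)^2 = β^2 := by
    rw [hEv, hEne a hav]; ring
  have ht2 : t^2 * σ^2 = α^2 := by
    rw [ht]; field_simp
  have htσ : t * σ^2 = α * σ := by
    rw [ht]; field_simp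
  have hqva : (dist (q v) (q a))^2 = r1^2 := by
    rw [hdist_sq, hQa, hPa, hEa]
    linear_combination (t^2*s^2 + t^2*r3^2)*hκsq - t^2*hσsq + ht2 + hβsq'
  -- distance from v to b
  have hQb : (dist (Qc v) (Qc b))^2 = κ^2 * ((1-t)^2 * s^2) := by
    rw [hQv, hQne b hbv, dist_eq_norm]
    have e : κ • ((q' ⟨a, hav⟩) + t • (q' ⟨b, hbv⟩ - q' ⟨a, hav⟩)) - κ • q' ⟨b, hbv⟩
        = κ • ((1-t) • (q' ⟨a, hav⟩ - q' ⟨b, hbv⟩)) := by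
      rw [← smul_sub]
      congr 1
      rw [sub_smul, one_smul, smul_sub, smul_sub]
      abel
    rw [e, norm_smul, norm_smul, Real.norm_eq_abs, Real.norm_eq_abs, ← dist_eq_norm,
      ← hs_def, mul_pow, mul_pow, sq_abs, sq_abs]
  have hPb : (Pc v - Pc b)^2 = κ^2 * ((1-t)^2 * r3^2) := by
    rw [hPv, hPne b hbv]
    have hsq' : r3^2 = (A - B)^2 := by rw [hr3, sq_abs]
    linear_combination (-(κ^2*(1-t)^2)) * hsq'
  have hEb : (Ec v - Ec b)^2 = β^2 := by
    rw [hEv, hEne b hbv]; ring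
  have h2σα : 2*σ*α = σ^2 + r1^2 - r2^2 := by
    rw [hα]; field_simp
  have hqvb : (dist (q v) (q b))^2 = r2^2 := by
    rw [hdist_sq, hQb, hPb, hEb]
    linear_combination ((1-t)^2*s^2 + (1-t)^2*r3^2)*hκsq - (1-t)^2*hσsq
      + ht2 - 2*htσ + hβsq' - h2σα
  -- the extended framework is equivalent to (G, p)
  have hdista : dist (p v) (p a) = r1 := by
    rw [Real.dist_eq, hpv, hpne a hav, ← hA, ← hr1]
  have hdistb : dist (p v) (p b) = r2 := by
    rw [Real.dist_eq, hpv, hpne b hbv, ← hB, ← hr2]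
  have hequiv : FrameworkEquiv G p q := by
    intro w z hadj
    rcases eq_or_ne w v with hw | hw
    · have hz : z ≠ v := by
        rintro rfl
        rw [hw] at hadj
        exact G.loopless.irrefl z hadj
      rcases hnb z (by rwa [hw] at hadj) with hz2 | hz2
      · rw [hw, hz2, hdista]
        exact sqrt_sq_eq_of_sq_eq dist_nonneg hr1n hqva
      · rw [hw, hz2, hdistb]
        exact sqrt_sq_eq_of_sq_eq dist_nonneg hr2n hqvb
    · rcases eq_or_ne z v with hzv | hzv
      · have hadj' : G.Adj v w := by rw [← hzv]; exact hadj.symm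
        rw [dist_comm, dist_comm (p w) (p z)]
        rcases hnb w hadj' with hw2 | hw2
        · rw [hzv, hw2, hdista]
          exact sqrt_sq_eq_of_sq_eq dist_nonneg hr1n hqva
        · rw [hzv, hw2, hdistb]
          exact sqrt_sq_eq_of_sq_eq dist_nonneg hr2n hqvb
      · have hq'e : dist (q' ⟨w, hw⟩) (q' ⟨z, hzv⟩) = dist (p' ⟨w, hw⟩) (p' ⟨z, hzv⟩) :=
          @hequiv' ⟨w, hw⟩ ⟨z, hzv⟩ hadj
        have hpe : dist (p w) (p z) = dist (p' ⟨w, hw⟩) (p' ⟨z, hzv⟩) := by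
          rw [Real.dist_eq, Real.dist_eq, hpne w hw, hpne z hzv]
        apply sqrt_sq_eq_of_sq_eq dist_nonneg dist_nonneg
        rw [hold w z hw hzv, hq'e, hpe]
        ring
  have hcong := hG p hpgen (d+2) q hequiv
  -- conclude the congruence of the smaller framework
  intro w' z'
  have h := hcong w'.val z'.val
  have hsq := congrArg (·^2) h
  rw [hold w'.val z'.val w'.2 z'.2] at hsq
  have hpe : dist (p w'.val) (p z'.val) = dist (p' w') (p' z') := by
    rw [Real.dist_eq, Real.dist_eq, hpne w'.val w'.2, hpne z'.val z'.2]
  rw [hpe] at hsq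
  apply sqrt_sq_eq_of_sq_eq dist_nonneg dist_nonneg
  have : (dist (q' ⟨w'.val, w'.2⟩) (q' ⟨z'.val, z'.2⟩))^2 = (dist (p' w') (p' z'))^2 := by
    linarith [hsq]
  exact this
lemma twice_card_edges {V : Type u} [Fintype V] (G : SimpleGraph V) [DecidableRel G.Adj] :
    2 * Nat.card G.edgeSet = ∑ u, G.degree u := by
  classical
  rw [SimpleGraph.sum_degrees_eq_twice_card_edges]
  congr 1
  rw [Nat.card_eq_fintype_card, SimpleGraph.edgeFinset, Set.toFinset_card]

lemma degree_comap {V : Type u} [Fintype V] [DecidableEq V] (G : SimpleGraph V)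
    [DecidableRel G.Adj] (v : V) (u : V) (hu : u ≠ v)
    [DecidableRel (SimpleGraph.comap (Subtype.val : {w : V // w ≠ v} → V) G).Adj] :
    (SimpleGraph.comap (Subtype.val : {w : V // w ≠ v} → V) G).degree ⟨u, hu⟩
      = ((G.neighborFinset u).erase v).card := by
  apply Finset.card_bij (fun w _ => w.val)
  · intro w hw
    rw [Finset.mem_erase]
    rw [SimpleGraph.mem_neighborFinset] at hw
    exact ⟨w.2, (SimpleGraph.mem_neighborFinset _ _ _).2 hw⟩
  · intro w₁ _ w₂ _ h
    exact Subtype.ext h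
  · intro w hw
    rw [Finset.mem_erase, SimpleGraph.mem_neighborFinset] at hw
    exact ⟨⟨w, hw.1⟩, (SimpleGraph.mem_neighborFinset _ _ _).2 hw.2, rfl⟩

lemma sum_degree_comap {V : Type u} [Fintype V] [DecidableEq V] (G : SimpleGraph V)
    [DecidableRel G.Adj] (v : V)
    [DecidableRel (SimpleGraph.comap (Subtype.val : {w : V // w ≠ v} → V) G).Adj] :
    (∑ u : {w : V // w ≠ v},
        (SimpleGraph.comap (Subtype.val : {w : V // w ≠ v} → V) G).degree u)
      + 2 * G.degree v = ∑ u, G.degree u := by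
  classical
  have h1 : ∀ u : {w : V // w ≠ v},
      (SimpleGraph.comap (Subtype.val : {w : V // w ≠ v} → V) G).degree u
        + (if G.Adj u.val v then 1 else 0) = G.degree u.val := by
    rintro ⟨u, hu⟩
    rw [degree_comap G v u hu]
    by_cases h : G.Adj u v
    · have hv : v ∈ G.neighborFinset u := (SimpleGraph.mem_neighborFinset _ _ _).2 h
      rw [if_pos h]
      exact Finset.card_erase_add_one hv
    · have hv : v ∉ G.neighborFinset u := fun hc =>
        h ((SimpleGraph.mem_neighborFinset _ _ _).1 hc)
      rw [if_neg h, Finset.erase_eq_of_notMem hv, add_zero]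
      rfl
  -- sum over the subtype
  have h2 : ∀ f : V → ℕ, (∑ u : {w : V // w ≠ v}, f u.val) = ∑ u ∈ Finset.univ.erase v, f u := by
    intro f
    exact (Finset.sum_subtype (p := fun w => w ≠ v) (Finset.univ.erase v)
      (fun x => by simp) f).symm
  have h3 : (∑ u : {w : V // w ≠ v},
      ((SimpleGraph.comap (Subtype.val : {w : V // w ≠ v} → V) G).degree u
        + (if G.Adj u.val v then 1 else 0))) = ∑ u : {w : V // w ≠ v}, G.degree u.val :=
    Finset.sum_congr rfl (fun u _ => h1 u)
  rw [Finset.sum_add_distrib] at h3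
  have h4 : (∑ u : {w : V // w ≠ v}, (if G.Adj u.val v then 1 else 0)) = G.degree v := by
    rw [h2 (fun u => if G.Adj u v then 1 else 0), Finset.sum_boole]
    have : (Finset.univ.erase v).filter (fun u => G.Adj u v) = G.neighborFinset v := by
      ext w
      simp only [Finset.mem_filter, Finset.mem_erase, Finset.mem_univ, true_and, and_true,
        SimpleGraph.mem_neighborFinset]
      constructor
      · exact fun h => h.2.symm
      · intro h
        exact ⟨(G.ne_of_adj h).symm, h.symm⟩
    simp [this]
  have h5 : (∑ u : {w : V // w ≠ v}, G.degree u.val) = ∑ u ∈ Finset.univ.erase v, G.degree u :=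
    h2 (fun u => G.degree u)
  have h6 : (∑ u ∈ Finset.univ.erase v, G.degree u) + G.degree v = ∑ u, G.degree u :=
    Finset.sum_erase_add _ _ (Finset.mem_univ v)
  omega

lemma edge_drop {V : Type u} [Fintype V] [DecidableEq V] (G : SimpleGraph V)
    [DecidableRel G.Adj] (v : V)
    [DecidableRel (SimpleGraph.comap (Subtype.val : {w : V // w ≠ v} → V) G).Adj] :
    2 * Nat.card (SimpleGraph.comap (Subtype.val : {w : V // w ≠ v} → V) G).edgeSet
      + 2 * G.degree v = 2 * Nat.card G.edgeSet := by
  rw [twice_card_edges, twice_card_edges]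
  exact sum_degree_comap G v

lemma aux_induction : ∀ (n : ℕ) (V : Type u) [Fintype V] (G : SimpleGraph V),
    Fintype.card V = n → 3 ≤ n → 2 * Nat.card G.edgeSet < min (3*n) (4*n-6) →
    ¬ GenUnivRigid G := by
  intro n
  induction n using Nat.strong_induction_on with
  | _ n ih =>
    intro V _ G hcard h3 hE hGUR
    classical
    have hE' : (∑ u, G.degree u) < min (3*n) (4*n-6) := by
      rw [← twice_card_edges]; exact hE
    -- minimum degree at least 2
    have hmin : ∀ v : V, 2 ≤ G.degree v := by
      intro v
      by_contra hlt
      push_neg at hlt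
      have h3' : 3 ≤ Fintype.card V := by omega
      have : ∃ u : V, u ≠ v ∧ ∀ w, G.Adj v w → w = u := by
        interval_cases h : G.degree v
        · have hemp : G.neighborFinset v = ∅ := Finset.card_eq_zero.1 h
          have : Nontrivial V := Fintype.one_lt_card_iff_nontrivial.1 (by omega)
          obtain ⟨u, hu⟩ := exists_ne v
          refine ⟨u, hu, fun w hw => ?_⟩
          have := (SimpleGraph.mem_neighborFinset _ _ _).2 hw
          rw [hemp] at this
          exact absurd this (Finset.notMem_empty w)
        · obtain ⟨u, hu⟩ := Finset.card_eq_one.1 h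
          have hadj : G.Adj v u := by
            have : u ∈ G.neighborFinset v := by rw [hu]; exact Finset.mem_singleton_self u
            exact (SimpleGraph.mem_neighborFinset _ _ _).1 this
          refine ⟨u, (G.ne_of_adj hadj).symm, fun w hw => ?_⟩
          have : w ∈ G.neighborFinset v := (SimpleGraph.mem_neighborFinset _ _ _).2 hw
          rw [hu] at this
          exact Finset.mem_singleton.1 this
      obtain ⟨u, hu, hnb⟩ := this
      exact not_GUR_of_low_degree G h3' v u hu hnb hGUR
    have hlow : 2 * n ≤ ∑ u, G.degree u := by
      calc 2 * n = ∑ _u : V, 2 := by rw [Finset.sum_const, Finset.card_univ, hcard]; ring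
      _ ≤ ∑ u, G.degree u := Finset.sum_le_sum (fun u _ => hmin u)
    have hminr := min_le_right (3*n) (4*n-6)
    have hminl := min_le_left (3*n) (4*n-6)
    have hn4 : 4 ≤ n := by omega
    -- a vertex of degree exactly two exists
    have hex : ∃ v : V, G.degree v = 2 := by
      by_contra h
      push_neg at h
      have h3' : ∀ v : V, 3 ≤ G.degree v := by
        intro v
        have := hmin v
        have := h v
        omega
      have : 3 * n ≤ ∑ u, G.degree u := by
        calc 3 * n = ∑ _u : V, 3 := by rw [Finset.sum_const, Finset.card_univ, hcard]; ring
        _ ≤ ∑ u, G.degree u := Finset.sum_le_sum (fun u _ => h3' u)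
      have := min_le_left (3*n) (4*n-6)
      omega
    obtain ⟨v, hv⟩ := hex
    obtain ⟨a, b, hab, hnbhd⟩ := Finset.card_eq_two.1 hv
    have hadja : G.Adj v a := by
      have : a ∈ G.neighborFinset v := by rw [hnbhd]; simp
      exact (SimpleGraph.mem_neighborFinset _ _ _).1 this
    have hadjb : G.Adj v b := by
      have : b ∈ G.neighborFinset v := by rw [hnbhd]; simp
      exact (SimpleGraph.mem_neighborFinset _ _ _).1 this
    have hnb : ∀ w, G.Adj v w → w = a ∨ w = b := by
      intro w hw
      have : w ∈ G.neighborFinset v := (SimpleGraph.mem_neighborFinset _ _ _).2 hw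
      rw [hnbhd] at this
      simpa using this
    have hG' := deletion_lemma G v a b hab (G.ne_of_adj hadja).symm (G.ne_of_adj hadjb).symm
      hnb hGUR
    -- cardinalities for the smaller graph
    have hcard' : Fintype.card {w : V // w ≠ v} = n - 1 := by
      have h1 := Fintype.card_subtype_compl (fun u : V => u = v)
      have h2 : Fintype.card {x : V // x = v} = 1 := Fintype.card_subtype_eq v
      simp only [ne_eq]
      rw [h1, h2, hcard]
    have hE'' : 2 * Nat.card (SimpleGraph.comap (Subtype.val : {w : V // w ≠ v} → V) G).edgeSet
        < min (3*(n-1)) (4*(n-1)-6) := by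
      have e1 := edge_drop G v
      rw [hv] at e1
      omega
    exact ih (n-1) (by omega) {w : V // w ≠ v}
      (SimpleGraph.comap (Subtype.val : {w : V // w ≠ v} → V) G)
      hcard' (by omega) hE'' hG'
/-- A graph with at least six vertices and fewer than `3|V|/2` edges is not
generically universally rigid in `ℝ¹`. -/
theorem few_edges_not_genUnivRigid {V : Type*} [Fintype V] (G : SimpleGraph V)
    (h6 : 6 ≤ Fintype.card V)
    (hE : 2 * Nat.card G.edgeSet < 3 * Fintype.card V) :
    ¬ GenUnivRigid G := by
  refine aux_induction (Fintype.card V) V G rfl (by omega) ?_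
  have h1 : 3 * Fintype.card V ≤ 4 * Fintype.card V - 6 := by omega
  omega
end

section
/- For n ≥ 4, every quasi-injective 1-dimensional realization of the graph K_{n−2,2}+e (the complete bipartite graph with parts of sizes n−2 and 2, plus the edge joining the two vertices of the small part) is universally rigid; this graph has exactly 2n − 3 edges, showing the bound |E| ≥ 2|V| − 3 is tight for quasi-injective universal rigidity. -/
/-- The graph `K_(m,2) + e`: complete bipartite with parts `Fin m` and `Fin 2`,
plus the edge joining the two vertices of the small part. -/
def Km2e (m : ℕ) : SimpleGraph (Fin m ⊕ Fin 2) where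
  Adj x y := match x, y with
    | .inl _, .inl _ => False
    | .inr a, .inr b => a ≠ b
    | .inl _, .inr _ => True
    | .inr _, .inl _ => True
  symm := ⟨by rintro (a|a) (b|b) h <;> first | exact h.elim | exact h.symm | trivial⟩
  loopless := ⟨by rintro (a|a) h <;> simp at h⟩

open RealInnerProductSpace in
/-- Equality case: if three squared distances match a collinear configuration on the line,
the third point is the corresponding affine combination of the other two. -/
lemma collinear_key {E : Type*} [NormedAddCommGroup E] [InnerProductSpace ℝ E]
    (A B X : E) (a b x : ℝ) (hab : a ≠ b)
    (hAB : ‖B - A‖ ^ 2 = (b - a) ^ 2)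
    (hXA : ‖X - A‖ ^ 2 = (x - a) ^ 2)
    (hXB : ‖X - B‖ ^ 2 = (x - b) ^ 2) :
    X = A + ((x - a) / (b - a)) • (B - A) := by
  have hba : b - a ≠ 0 := sub_ne_zero.mpr (Ne.symm hab)
  set t : ℝ := (x - a) / (b - a) with ht
  set u : E := X - A with hu
  set w : E := B - A with hw
  have huw : X - B = u - w := by rw [hu, hw]; abel
  rw [huw] at hXB
  have hinner : ⟪u, w⟫ = (x - a) * (b - a) := by
    have h := norm_sub_sq_real u w
    rw [hXB, hXA, hAB] at h
    nlinarith [h]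
  have hzero : ‖u - t • w‖ ^ 2 = 0 := by
    rw [norm_sub_sq_real, real_inner_smul_right, hinner, norm_smul, mul_pow, hXA, hAB,
      Real.norm_eq_abs, sq_abs, ht]
    field_simp
    ring
  have h0 : u - t • w = 0 :=
    norm_eq_zero.mp (pow_eq_zero_iff two_ne_zero |>.mp hzero)
  have : u = t • w := by rwa [sub_eq_zero] at h0
  rw [hu] at this
  rw [← this]
  abel

/-- Auxiliary enumeration of the edges of `Km2e m`. -/
def Km2eEdgeEnum (m : ℕ) : Fin m ⊕ Fin m ⊕ Unit → Sym2 (Fin m ⊕ Fin 2)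
  | .inl i => s(.inl i, .inr 0)
  | .inr (.inl i) => s(.inl i, .inr 1)
  | .inr (.inr _) => s(.inr 0, .inr 1)

lemma dist_sq_of_dist_abs {E : Type*} [NormedAddCommGroup E] (X Y : E) (s : ℝ)
    (h : dist X Y = |s|) : ‖X - Y‖ ^ 2 = s ^ 2 := by
  rw [← dist_eq_norm, h, sq_abs]

/-- For `n ≥ 4`, `K_(n−2,2) + e` has exactly `2n − 3` edges and every
quasi-injective 1-dimensional realization of it is universally rigid. -/
theorem Km2e_quasiInjective_univRigid (n : ℕ) (hn : 4 ≤ n) :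
    Nat.card (Km2e (n - 2)).edgeSet = 2 * n - 3 ∧
      ∀ p : (Fin (n - 2) ⊕ Fin 2) → ℝ,
        (∀ ⦃u v⦄, (Km2e (n - 2)).Adj u v → p u ≠ p v) →
        UniversallyRigid (Km2e (n - 2)) p := by
  set m := n - 2 with hm
  constructor
  · -- edge count
    have hinj : Function.Injective (Km2eEdgeEnum m) := by
      rintro (i | i | ⟨⟩) (j | j | ⟨⟩) h <;>
        simp_all [Km2eEdgeEnum, Sym2.eq_iff]
    have hrange : Set.range (Km2eEdgeEnum m) = (Km2e m).edgeSet := by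
      apply Set.eq_of_subset_of_subset
      · rintro _ ⟨(i | i | ⟨⟩), rfl⟩ <;>
          simp [Km2eEdgeEnum, SimpleGraph.mem_edgeSet, Km2e]
      · intro e he
        induction e using Sym2.ind with
        | _ u v =>
          rw [SimpleGraph.mem_edgeSet] at he
          match u, v with
          | .inl i, .inl j => exact absurd he (by simp [Km2e])
          | .inl i, .inr j =>
            fin_cases j
            · exact ⟨.inl i, rfl⟩
            · exact ⟨.inr (.inl i), rfl⟩
          | .inr j, .inl i =>
            fin_cases j
            · exact ⟨.inl i, Sym2.eq_swap⟩
            · exact ⟨.inr (.inl i), Sym2.eq_swap⟩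
          | .inr c, .inr b =>
            have hcb : c ≠ b := he
            fin_cases c <;> fin_cases b <;>
              first
                | exact absurd rfl hcb
                | exact ⟨.inr (.inr ()), rfl⟩
                | exact ⟨.inr (.inr ()), Sym2.eq_swap⟩
    have := Nat.card_range_of_injective hinj
    rw [hrange] at this
    rw [this]
    simp only [Nat.card_eq_fintype_card, Fintype.card_sum, Fintype.card_fin,
      Fintype.card_unit]
    omega
  · -- universal rigidity
    intro p hqi d q hq
    have adj01 : (Km2e m).Adj (.inr 0) (.inr 1) := by
      show (0 : Fin 2) ≠ 1
      decide
    have adjL : ∀ (i : Fin m) (j : Fin 2), (Km2e m).Adj (.inl i) (.inr j) := fun i j =>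
      trivial
    set a := p (.inr 0) with ha
    set b := p (.inr 1) with hb
    set A := q (.inr 0) with hA
    set B := q (.inr 1) with hB
    have hab : a ≠ b := hqi adj01
    have hba : b - a ≠ 0 := sub_ne_zero.mpr (Ne.symm hab)
    have hBA : dist B A = |b - a| := by
      rw [dist_comm, hq adj01, Real.dist_eq]
      exact abs_sub_comm _ _
    have hBA2 : ‖B - A‖ ^ 2 = (b - a) ^ 2 := dist_sq_of_dist_abs B A (b - a) hBA
    set t : Fin m → ℝ := fun i => (p (.inl i) - a) / (b - a) with htdef
    have hline : ∀ i : Fin m, q (.inl i) = A + t i • (B - A) := by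
      intro i
      refine collinear_key A B (q (.inl i)) a b (p (.inl i)) hab hBA2 ?_ ?_
      · exact dist_sq_of_dist_abs _ _ _ (by rw [hq (adjL i 0), Real.dist_eq])
      · exact dist_sq_of_dist_abs _ _ _ (by rw [hq (adjL i 1), Real.dist_eq])
    have hnormBA : ‖B - A‖ = |b - a| := by rw [← dist_eq_norm]; exact hBA
    intro u v
    match u, v with
    | .inl i, .inl j =>
      rw [dist_eq_norm, hline i, hline j, Real.dist_eq]
      have hvec : A + t i • (B - A) - (A + t j • (B - A)) = (t i - t j) • (B - A) := by
        rw [sub_smul]; abel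
      rw [hvec, norm_smul, Real.norm_eq_abs, hnormBA]
      have htd : t i - t j = (p (.inl i) - p (.inl j)) / (b - a) := by
        simp only [htdef]
        ring
      rw [htd, abs_div, div_mul_cancel₀ _ (abs_ne_zero.mpr hba)]
    | .inl i, .inr j => exact hq (adjL i j)
    | .inr j, .inl i => rw [dist_comm, dist_comm (p _)]; exact hq (adjL i j)
    | .inr j, .inr k =>
      by_cases h : j = k
      · subst h; simp
      · exact hq (show j ≠ k from h)
end
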